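/- arXiv:2601.12831 — 7 statements merged into one kernel-verified Lean document; each statement's English description precedes it below -/
import Mathlib

section
/- Let X and Y be real Banach spaces, let A : X → Y be a bounded linear operator, and let B : ran(A) → X be a (possibly nonlinear) continuous map satisfying A(B(y)) = y for all y ∈ ran(A). Then ran(A) is a closed subspace of Y. -/
/-- If a bounded linear operator `A` between real Banach spaces admits a continuous
(possibly nonlinear) right inverse on its range, then its range is closed. -/
theorem stmt_0
    {X Y : Type*} [NormedAddCommGroup X] [NormedSpace ℝ X] [CompleteSpace X]
    [NormedAddCommGroup Y] [NormedSpace ℝ Y] [CompleteSpace Y]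
    (A : X →L[ℝ] Y)
    (B : LinearMap.range (A : X →ₗ[ℝ] Y) → X) (hBcont : Continuous B)
    (hB : ∀ y : LinearMap.range (A : X →ₗ[ℝ] Y), A (B y) = (y : Y)) :
    IsClosed (LinearMap.range (A : X →ₗ[ℝ] Y) : Set Y) := by
  set z₀ : LinearMap.range (A : X →ₗ[ℝ] Y) := ⟨0, zero_mem _⟩ with hz₀
  -- continuity of B at 0 gives a bound on B near 0
  obtain ⟨δ, hδ, hδB⟩ := Metric.continuousAt_iff.1 (hBcont.continuousAt (x := z₀)) 1 one_pos
  set M : ℝ := ‖B z₀‖ + 1 with hM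
  have hM0 : 0 < M := lt_of_lt_of_le (by positivity) (le_add_of_nonneg_left (norm_nonneg _))
  have hbound : ∀ z : LinearMap.range (A : X →ₗ[ℝ] Y), ‖(z : Y)‖ < δ → ‖B z‖ ≤ M := by
    intro z hz
    have hdz : dist z z₀ < δ := by
      rw [Subtype.dist_eq]
      simpa [hz₀, dist_eq_norm] using hz
    have h1 : dist (B z) (B z₀) < 1 := hδB hdz
    rw [dist_eq_norm] at h1
    have h2 := norm_sub_norm_le (B z) (B z₀)
    rw [hM]; linarith
  -- controlled surjectivity: every y in R has a preimage of norm ≤ C ‖y‖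
  set C : ℝ := 2 * M / δ with hC
  have hC0 : 0 < C := by positivity
  have key : ∀ y ∈ LinearMap.range (A : X →ₗ[ℝ] Y), ∃ x, A x = y ∧ ‖x‖ ≤ C * ‖y‖ := by
    intro y hy
    rcases eq_or_ne y 0 with rfl | hy0
    · exact ⟨0, by simp, by simp⟩
    · have hny : 0 < ‖y‖ := norm_pos_iff.2 hy0
      set t : ℝ := δ / (2 * ‖y‖) with ht
      have ht0 : 0 < t := by positivity
      have hzmem : t • y ∈ LinearMap.range (A : X →ₗ[ℝ] Y) := Submodule.smul_mem _ _ hy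
      set z : LinearMap.range (A : X →ₗ[ℝ] Y) := ⟨t • y, hzmem⟩ with hz
      have htny : t * ‖y‖ = δ / 2 := by
        rw [ht]; field_simp
      have hznorm : ‖(z : Y)‖ < δ := by
        simp only [hz, norm_smul, Real.norm_eq_abs, abs_of_pos ht0]
        rw [htny]; linarith
      refine ⟨t⁻¹ • B z, ?_, ?_⟩
      · rw [map_smul, hB z]
        simp only [hz]
        rw [smul_smul, inv_mul_cancel₀ ht0.ne', one_smul]
      · rw [norm_smul, Real.norm_eq_abs, abs_of_pos (inv_pos.2 ht0)]
        have hBz := hbound z hznorm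
        have h3 : t⁻¹ = 2 * ‖y‖ / δ := by
          rw [ht]; field_simp
        rw [h3, hC]
        calc 2 * ‖y‖ / δ * ‖B z‖ ≤ 2 * ‖y‖ / δ * M := by
              apply mul_le_mul_of_nonneg_left hBz (by positivity)
          _ = 2 * M / δ * ‖y‖ := by ring
  -- now use the controlled closure theorem
  set f : NormedAddGroupHom X Y :=
    AddMonoidHom.mkNormedAddGroupHom (AddMonoidHom.mk' (fun x => A x) (by intro a b; simp)) ‖A‖
      (fun v => A.le_opNorm v) with hf
  have hsurj : f.SurjectiveOnWith (LinearMap.range (A : X →ₗ[ℝ] Y)).toAddSubgroup C := by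
    intro y hy
    rcases key y hy with ⟨x, hx1, hx2⟩
    refine ⟨x, ?_, hx2⟩
    exact hx1
  have hclos := controlled_closure_of_complete (f := f) hC0 one_pos hsurj
  apply isClosed_of_closure_subset
  intro y hy
  have hy' : y ∈ (LinearMap.range (A : X →ₗ[ℝ] Y)).toAddSubgroup.topologicalClosure := by
    exact hy
  rcases hclos y hy' with ⟨x, hx, -⟩
  exact ⟨x, hx⟩
end

section
/- Let X be a real Hilbert space, Y a real Banach space, and A : X → Y a bounded linear operator such that ran(A) is not closed in Y. Then every map B : ran(A) → X (not necessarily linear) satisfying A(B(y)) = y for all y ∈ ran(A) is discontinuous. -/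
/-- If `ran A` is not closed, then every (possibly nonlinear) right inverse
`B : ran A → X` of `A` is discontinuous. -/
theorem stmt_7
    {X : Type*} [NormedAddCommGroup X] [InnerProductSpace ℝ X] [CompleteSpace X]
    {Y : Type*} [NormedAddCommGroup Y] [NormedSpace ℝ Y] [CompleteSpace Y]
    (A : X →L[ℝ] Y)
    (hran : ¬ IsClosed (LinearMap.range (A : X →ₗ[ℝ] Y) : Set Y))
    (B : LinearMap.range (A : X →ₗ[ℝ] Y) → X)
    (hB : ∀ y : LinearMap.range (A : X →ₗ[ℝ] Y), A (B y) = (y : Y)) :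
    ¬ Continuous B := by
  intro hcont
  apply hran
  set K : Submodule ℝ X := LinearMap.ker (A : X →ₗ[ℝ] Y) with hK
  have hKclosed : IsClosed (K : Set X) := ContinuousLinearMap.isClosed_ker A
  haveI : CompleteSpace K := hKclosed.completeSpace_coe
  -- the projected right inverse
  let f : LinearMap.range (A : X →ₗ[ℝ] Y) → X := fun y => B y - (K.orthogonalProjectionOnto (B y) : X)
  have hmem : ∀ y, f y ∈ Kᗮ := fun y => Submodule.sub_starProjection_mem_orthogonal (K := K) (B y)
  have hAf : ∀ y, A (f y) = (y : Y) := by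
    intro y
    have h1 : (K.orthogonalProjectionOnto (B y) : X) ∈ K := (K.orthogonalProjectionOnto (B y)).2
    have h2 : A ((K.orthogonalProjectionOnto (B y) : X)) = 0 := h1
    simp only [f, map_sub, h2, hB y, sub_zero]
  have huniq : ∀ u v : X, u ∈ Kᗮ → v ∈ Kᗮ → A u = A v → u = v := by
    intro u v hu hv hA
    have h1 : u - v ∈ Kᗮ := Submodule.sub_mem _ hu hv
    have h2 : u - v ∈ K := by
      show A (u - v) = 0
      simp [map_sub, hA]
    have h3 : u - v ∈ (⊥ : Submodule ℝ X) :=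
      (Submodule.orthogonal_disjoint K).le_bot ⟨h2, h1⟩
    exact sub_eq_zero.mp h3
  -- f is linear
  let Clin : LinearMap.range (A : X →ₗ[ℝ] Y) →ₗ[ℝ] X :=
    { toFun := f
      map_add' := by
        intro y₁ y₂
        refine huniq _ _ (hmem _) (Submodule.add_mem _ (hmem y₁) (hmem y₂)) ?_
        rw [map_add, hAf, hAf, hAf]
        push_cast
        ring
      map_smul' := by
        intro c y
        refine huniq _ _ (hmem _) (Submodule.smul_mem _ c (hmem y)) ?_
        rw [map_smul, hAf, hAf]
        simp }
  have hfcont : Continuous f := by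
    have h1 : Continuous fun y => (K.orthogonalProjectionOnto (B y) : X) :=
      continuous_subtype_val.comp ((K.orthogonalProjectionOnto).continuous.comp hcont)
    exact hcont.sub h1
  let C : LinearMap.range (A : X →ₗ[ℝ] Y) →L[ℝ] X := ⟨Clin, hfcont⟩
  -- sequential closedness
  rw [← isSeqClosed_iff_isClosed]
  intro s y hs hy
  set u : ℕ → LinearMap.range (A : X →ₗ[ℝ] Y) := fun n => ⟨s n, hs n⟩ with hu
  have hus : CauchySeq u := by
    rw [Metric.cauchySeq_iff]
    have := (hy.cauchySeq)
    rw [Metric.cauchySeq_iff] at this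
    intro ε hε
    obtain ⟨N, hN⟩ := this ε hε
    exact ⟨N, fun m hm n hn => by simpa [hu, Subtype.dist_eq] using hN m hm n hn⟩
  have hCu : CauchySeq fun n => C (u n) := hus.map C.uniformContinuous
  obtain ⟨x, hx⟩ := cauchySeq_tendsto_of_complete hCu
  refine ⟨x, ?_⟩
  have h1 : Filter.Tendsto (fun n => A (C (u n))) Filter.atTop (nhds (A x)) :=
    (A.continuous.tendsto x).comp hx
  have h2 : (fun n => A (C (u n))) = s := by
    funext n
    exact hAf (u n)
  rw [h2] at h1
  exact tendsto_nhds_unique h1 hy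
end

section
/- Let X and Y be real Banach spaces, A : X → Y a bounded linear operator, P : X → X a bounded linear map with ran(P) ⊆ ker(A), U : X → X Lipschitz continuous, and f = id_X + P∘U (so f is Lipschitz with some constant L). Let B : ran(A) → X be a right inverse of A, D₀ ⊆ B(ran(A)), and let (𝓑_δ)_{δ>0} be maps 𝓑_δ : Y → X such that for every x₀ ∈ D₀, sup{‖x₀ − 𝓑_δ(y^δ)‖ : ‖A x₀ − y^δ‖ ≤ δ} → 0 as δ → 0. Then for every x ∈ f(D₀), sup{‖x − f(𝓑_δ(y^δ))‖ : y^δ ∈ Y, ‖A x − y^δ‖ ≤ δ} → 0 as δ → 0; that is, (f∘𝓑_δ)_{δ>0} is a regularization method on the signal class f(D₀). -/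
/-- Learned regularization: if `(𝓑_δ)` is a regularization method on `D₀ ⊆ B(ran A)`
(with `B` a right inverse of `A`) and `f = id + P ∘ U` is a (Lipschitz) null-space
network, then `(f ∘ 𝓑_δ)` is a regularization method on the signal class `f(D₀)`. -/
theorem stmt_12
    {X Y : Type*} [NormedAddCommGroup X] [NormedSpace ℝ X] [CompleteSpace X]
    [NormedAddCommGroup Y] [NormedSpace ℝ Y] [CompleteSpace Y]
    (A : X →L[ℝ] Y)
    (P : X →L[ℝ] X) (hP : LinearMap.range (P : X →ₗ[ℝ] X) ≤ LinearMap.ker (A : X →ₗ[ℝ] Y))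
    (U : X → X) (L : NNReal) (hU : LipschitzWith L U)
    (f : X → X) (hf : ∀ x : X, f x = x + P (U x))
    (B : LinearMap.range (A : X →ₗ[ℝ] Y) → X)
    (hB : ∀ y : LinearMap.range (A : X →ₗ[ℝ] Y), A (B y) = (y : Y))
    (D₀ : Set X) (hD₀ : D₀ ⊆ Set.range B)
    (Bfam : ℝ → Y → X)
    (hreg : ∀ x₀ ∈ D₀, ∀ ε : ℝ, 0 < ε → ∃ δ₀ > 0, ∀ δ : ℝ, 0 < δ → δ ≤ δ₀ →
      ∀ yδ : Y, ‖A x₀ - yδ‖ ≤ δ → ‖x₀ - Bfam δ yδ‖ ≤ ε) :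
    ∀ x ∈ f '' D₀, ∀ ε : ℝ, 0 < ε → ∃ δ₀ > 0, ∀ δ : ℝ, 0 < δ → δ ≤ δ₀ →
      ∀ yδ : Y, ‖A x - yδ‖ ≤ δ → ‖x - f (Bfam δ yδ)‖ ≤ ε := by

  rintro x ⟨x₀, hx₀, rfl⟩ ε hε
  set C : ℝ := 1 + ‖P‖ * L with hC
  have hC1 : (1:ℝ) ≤ C := le_add_of_nonneg_right (by positivity)
  have hCpos : (0:ℝ) < C := lt_of_lt_of_le one_pos hC1
  obtain ⟨δ₀, hδ₀, h⟩ := hreg x₀ hx₀ (ε / C) (div_pos hε hCpos)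
  refine ⟨δ₀, hδ₀, fun δ hδ hδδ yδ hy => ?_⟩
  have hAx : A (f x₀) = A x₀ := by
    rw [hf x₀, map_add]
    have : A (P (U x₀)) = 0 := hP ⟨U x₀, rfl⟩
    simp [this]
  rw [hAx] at hy
  have hb := h δ hδ hδδ yδ hy
  set b := Bfam δ yδ
  have key : f x₀ - f b = (x₀ - b) + P (U x₀ - U b) := by
    rw [hf x₀, hf b, map_sub]; abel
  calc ‖f x₀ - f b‖ = ‖(x₀ - b) + P (U x₀ - U b)‖ := by rw [key]
    _ ≤ ‖x₀ - b‖ + ‖P (U x₀ - U b)‖ := norm_add_le _ _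
    _ ≤ ‖x₀ - b‖ + ‖P‖ * ‖U x₀ - U b‖ := by
        gcongr; exact P.le_opNorm _
    _ ≤ ‖x₀ - b‖ + ‖P‖ * (L * ‖x₀ - b‖) := by
        have := hU.dist_le_mul x₀ b
        rw [dist_eq_norm, dist_eq_norm] at this
        gcongr
    _ = C * ‖x₀ - b‖ := by ring
    _ ≤ C * (ε / C) := by gcongr
    _ = ε := by field_simp
end

section
/- Let H and K be real Hilbert spaces, A : H → K a nonzero bounded linear operator, μ > 0, ρ > 0, c₁, c₂ > 0, and let (g_α)_{α>0} be continuous functions g_α : [0, ‖A*A‖] → ℝ satisfying (R1) λ^μ |1 − λ g_α(λ)| ≤ c₁ α^μ for all α > 0 and λ ∈ [0, ‖A*A‖], and (R2) sup_λ |g_α(λ)| ≤ c₂/α for all α > 0. Let α⋆ : (0,∞) → (0,∞) satisfy d₁ (δ/ρ)^{2/(2μ+1)} ≤ α⋆(δ) ≤ d₂ (δ/ρ)^{2/(2μ+1)} for constants d₁, d₂ > 0. Let P : H → H be the orthogonal projection onto ker(A), U : H → H Lipschitz continuous, and f = id_H + P∘U. Then there exists c > 0 such that for every w ∈ H with ‖w‖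 ≤ ρ, setting x = f((A*A)^μ w), and for every δ > 0 and y^δ ∈ K with ‖A x − y^δ‖ ≤ δ, one has ‖f(g_{α⋆(δ)}(A*A)(A* y^δ)) − x‖ ≤ c δ^{2μ/(2μ+1)} ρ^{1/(2μ+1)}. -/
set_option maxHeartbeats 2000000
set_option linter.unusedSectionVars false
open scoped NNReal
open RealInnerProductSpace ContinuousLinearMap

section merged_aux
variable {H : Type*} [NormedAddCommGroup H] [InnerProductSpace ℝ H] [CompleteSpace H]

lemma aux_cs (T : H →L[ℝ] H) (hsa : ∀ x y, ⟪T x, y⟫ = ⟪x, T y⟫)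
    (hpos : ∀ x, 0 ≤ ⟪T x, x⟫) (x y : H) :
    ⟪T x, y⟫ ^ 2 ≤ ⟪T x, x⟫ * ⟪T y, y⟫ := by
  have key : ∀ s : ℝ, 0 ≤ ⟪T y, y⟫ * (s * s) + (2 * ⟪T x, y⟫) * s + ⟪T x, x⟫ := by
    intro s
    have h0 := hpos (x + s • y)
    have expand : ⟪T (x + s • y), x + s • y⟫
        = ⟪T y, y⟫ * (s * s) + (2 * ⟪T x, y⟫) * s + ⟪T x, x⟫ := by
      have hyx : ⟪T y, x⟫ = ⟪T x, y⟫ := by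
        rw [hsa y x, real_inner_comm]
      simp [map_add, map_smul, inner_add_left, inner_add_right,
        real_inner_smul_left, real_inner_smul_right, hyx]
      ring
    rw [expand] at h0
    linarith
  have hd := discrim_le_zero key
  rw [discrim] at hd
  nlinarith

lemma aux_norm_le (T : H →L[ℝ] H) (hsa : ∀ x y, ⟪T x, y⟫ = ⟪x, T y⟫)
    (hpos : ∀ x, 0 ≤ ⟪T x, x⟫) {c : ℝ} (hc : 0 ≤ c)
    (hbd : ∀ x, ⟪T x, x⟫ ≤ c * ‖x‖ ^ 2) : ‖T‖ ≤ c := by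
  refine T.opNorm_le_bound hc (fun x => ?_)
  rcases eq_or_ne (T x) 0 with h0 | h0
  · rw [h0, norm_zero]
    positivity
  · have h1 : ‖T x‖ ^ 2 = ⟪T x, T x⟫ := (real_inner_self_eq_norm_sq _).symm
    have h2 := aux_cs T hsa hpos x (T x)
    have h3 : ⟪T x, x⟫ ≤ c * ‖x‖ ^ 2 := hbd x
    have h4 : ⟪T (T x), T x⟫ ≤ c * ‖T x‖ ^ 2 := hbd (T x)
    have h5 : (0:ℝ) < ‖T x‖ := norm_pos_iff.mpr h0
    have h7 : 0 ≤ ⟪T x, x⟫ := hpos x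
    have h6 : (‖T x‖ ^ 2) ^ 2 ≤ (c * ‖x‖ ^ 2) * (c * ‖T x‖ ^ 2) := by
      rw [h1]
      have e4 : ⟪T (T x), T x⟫ ≤ c * ⟪T x, T x⟫ := by rw [← h1]; exact h4
      have p1 : 0 ≤ ⟪T (T x), T x⟫ := hpos (T x)
      have p2 : 0 ≤ c * ‖x‖ ^ 2 := by positivity
      nlinarith [mul_nonneg (sub_nonneg.mpr h3) p1,
        mul_nonneg (sub_nonneg.mpr e4) p2]
    have h9 : ‖T x‖ ^ 2 ≤ (c * ‖x‖) ^ 2 := by nlinarith [sq_nonneg (‖T x‖), h5]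
    have h10 : 0 ≤ c * ‖x‖ := by positivity
    nlinarith [h9, h5, h10]

lemma aux_approx (T : H →L[ℝ] H) (hsa : ∀ x y, ⟪T x, y⟫ = ⟪x, T y⟫)
    (hpos : ∀ x, 0 ≤ ⟪T x, x⟫) {ε : ℝ} (hε : 0 < ε) :
    ∃ x : H, ‖x‖ ≤ 1 ∧ ‖T‖ - ε ≤ ⟪T x, x⟫ := by
  by_contra hcon
  push_neg at hcon
  have h0 : 0 < ‖T‖ - ε := by simpa using hcon 0 (by simp)
  have hbd : ∀ y : H, ⟪T y, y⟫ ≤ (‖T‖ - ε) * ‖y‖ ^ 2 := by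
    intro y
    rcases eq_or_ne y 0 with rfl | hy
    · simp
    · have hny : (0:ℝ) < ‖y‖ := norm_pos_iff.mpr hy
      have hx1 : ‖(‖y‖⁻¹ • y)‖ ≤ 1 := by
        rw [norm_smul]; simp [abs_of_nonneg (inv_nonneg.mpr hny.le)]
        rw [inv_mul_cancel₀ hny.ne']
      have := (hcon _ hx1).le
      have hexp : ⟪T (‖y‖⁻¹ • y), ‖y‖⁻¹ • y⟫ = ‖y‖⁻¹ * ‖y‖⁻¹ * ⟪T y, y⟫ := by
        simp [map_smul, real_inner_smul_left, real_inner_smul_right]; ring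
      rw [hexp] at this
      have h3 : ‖y‖ ^ 2 * (‖y‖⁻¹ * ‖y‖⁻¹) = 1 := by
        rw [sq]; field_simp
      calc ⟪T y, y⟫ = (‖y‖ ^ 2 * (‖y‖⁻¹ * ‖y‖⁻¹)) * ⟪T y, y⟫ := by rw [h3]; ring
        _ = ‖y‖ ^ 2 * (‖y‖⁻¹ * ‖y‖⁻¹ * ⟪T y, y⟫) := by ring
        _ ≤ ‖y‖ ^ 2 * (‖T‖ - ε) := mul_le_mul_of_nonneg_left this (sq_nonneg _)
        _ = (‖T‖ - ε) * ‖y‖ ^ 2 := by ring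
  have := aux_norm_le T hsa hpos (le_of_lt h0) hbd
  linarith

lemma aux_spec_norm (T : H →L[ℝ] H) (hsa : ∀ x y, ⟪T x, y⟫ = ⟪x, T y⟫)
    (hpos : ∀ x, 0 ≤ ⟪T x, x⟫) {M : ℝ} (hM : 0 ≤ M)
    (hspec : ∀ t ∈ spectrum ℝ T, t ≤ M) : ‖T‖ ≤ M := by
  by_contra hcon
  push_neg at hcon
  set t₀ : ℝ := ‖T‖ with ht₀
  have ht₀pos : 0 < t₀ := lt_of_le_of_lt hM hcon
  have hnotmem : t₀ ∉ spectrum ℝ T := fun hmem => absurd (hspec _ hmem) (not_le.mpr hcon)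
  rw [spectrum.notMem_iff] at hnotmem
  obtain ⟨u, hu⟩ := hnotmem
  set V : H →L[ℝ] H := (↑u⁻¹ : H →L[ℝ] H) with hV
  set C : ℝ := ‖V‖ with hC
  have hCnn : 0 ≤ C := norm_nonneg _
  have hinv : ∀ x : H, x = V (t₀ • x - T x) := by
    intro x
    have h2 : (↑u : H →L[ℝ] H) x = t₀ • x - T x := by
      rw [hu]
      simp [Algebra.algebraMap_eq_smul_one, ContinuousLinearMap.sub_apply,
        ContinuousLinearMap.smul_apply, ContinuousLinearMap.one_apply]
    rw [hV, ← h2, ← ContinuousLinearMap.mul_apply, u.inv_mul, ContinuousLinearMap.one_apply]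
  set ε : ℝ := t₀ / (2 + 8 * C ^ 2 * t₀ ^ 2) with hε
  have hD : (0:ℝ) < 2 + 8 * C ^ 2 * t₀ ^ 2 := by positivity
  have hεpos : 0 < ε := by positivity
  obtain ⟨x, hx1, hx2⟩ := aux_approx T hsa hpos hεpos
  have hTx : ‖T x‖ ≤ t₀ * ‖x‖ := T.le_opNorm x
  have hTxx_le : ⟪T x, x⟫ ≤ t₀ * ‖x‖ ^ 2 := by
    calc ⟪T x, x⟫ ≤ ‖T x‖ * ‖x‖ := real_inner_le_norm _ _
      _ ≤ t₀ * ‖x‖ * ‖x‖ := by nlinarith [norm_nonneg x]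
      _ = t₀ * ‖x‖ ^ 2 := by ring
  have hexpand : ‖t₀ • x - T x‖ ^ 2 = t₀ ^ 2 * ‖x‖ ^ 2 - 2 * t₀ * ⟪T x, x⟫ + ‖T x‖ ^ 2 := by
    rw [norm_sub_sq_real]
    rw [norm_smul, real_inner_smul_left]
    rw [real_inner_comm x (T x)]
    simp [abs_of_nonneg ht₀pos.le, mul_pow]
    ring
  have hb1 : ‖t₀ • x - T x‖ ^ 2 ≤ 2 * t₀ * ε := by
    rw [hexpand]
    have h1 : ‖T x‖ ^ 2 ≤ t₀ ^ 2 * ‖x‖ ^ 2 := by nlinarith [norm_nonneg (T x), norm_nonneg x]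
    have h2 : ‖x‖ ^ 2 ≤ 1 := by nlinarith [norm_nonneg x]
    nlinarith [hx2, ht₀pos]
  have hb2 : ‖x‖ ≤ C * ‖t₀ • x - T x‖ := by
    calc ‖x‖ = ‖V (t₀ • x - T x)‖ := by rw [← hinv x]
      _ ≤ C * ‖t₀ • x - T x‖ := V.le_opNorm _
  have hb3 : (t₀ - ε) / t₀ ≤ ‖x‖ ^ 2 := by
    rw [div_le_iff₀ ht₀pos]
    nlinarith [hx2, hTxx_le]
  have hb4 : ‖x‖ ^ 2 ≤ C ^ 2 * (2 * t₀ * ε) := by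
    nlinarith [hb2, norm_nonneg x, norm_nonneg (t₀ • x - T x), hb1, hCnn]
  have hkey : t₀ - ε ≤ 2 * C ^ 2 * t₀ ^ 2 * ε := by
    rw [div_le_iff₀ ht₀pos] at hb3
    nlinarith [hb3, hb4, ht₀pos]
  have hεD : ε * (2 + 8 * C ^ 2 * t₀ ^ 2) = t₀ := by
    rw [hε]; field_simp
  nlinarith [hkey, hεD, mul_pos hεpos (show (0:ℝ) < 1 + 6 * C ^ 2 * t₀ ^ 2 by positivity)]

lemma aux_sa_inner (S : H →L[ℝ] H) (hS : IsSelfAdjoint S) :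
    ∀ x y, ⟪S x, y⟫ = ⟪x, S y⟫ := by
  intro x y
  rw [ContinuousLinearMap.isSelfAdjoint_iff'] at hS
  conv_lhs => rw [← hS]
  rw [ContinuousLinearMap.adjoint_inner_left]

variable [ContinuousFunctionalCalculus ℝ (H →L[ℝ] H) IsSelfAdjoint]

variable [ContinuousFunctionalCalculus ℝ (H →L[ℝ] H) IsSelfAdjoint]

lemma aux_sa_norm_le (S : H →L[ℝ] H) (hS : IsSelfAdjoint S) {M : ℝ} (hM : 0 ≤ M)
    (hspec : ∀ t ∈ spectrum ℝ S, |t| ≤ M) : ‖S‖ ≤ M := by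
  have hsa := aux_sa_inner S hS
  set T : H →L[ℝ] H := S * S with hT
  have hTsa : ∀ x y, ⟪T x, y⟫ = ⟪x, T y⟫ := by
    intro x y
    simp only [hT, ContinuousLinearMap.mul_apply]
    rw [hsa, hsa]
  have hTpos : ∀ x, 0 ≤ ⟪T x, x⟫ := by
    intro x
    simp only [hT, ContinuousLinearMap.mul_apply]
    rw [hsa]
    exact real_inner_self_nonneg
  have hcfc : T = cfc (fun t : ℝ => t * t) S := by
    rw [cfc_mul (fun t : ℝ => t) (fun t : ℝ => t) S (continuousOn_id) (continuousOn_id)]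
    rw [cfc_id' ℝ S hS]
  have hspecT : ∀ t ∈ spectrum ℝ T, t ≤ M ^ 2 := by
    intro t ht
    rw [hcfc, cfc_map_spectrum (fun t : ℝ => t * t) S hS (by fun_prop)] at ht
    obtain ⟨s, hs, rfl⟩ := ht
    have := hspec s hs
    show s * s ≤ M ^ 2
    nlinarith [abs_nonneg s, sq_abs s, abs_mul_abs_self s]
  have hTnorm : ‖T‖ ≤ M ^ 2 := aux_spec_norm T hTsa hTpos (by positivity) hspecT
  have hSS : ‖T‖ = ‖S‖ * ‖S‖ := by
    rw [hT, ContinuousLinearMap.mul_def]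
    have := ContinuousLinearMap.norm_adjoint_comp_self S
    rw [ContinuousLinearMap.isSelfAdjoint_iff'.mp hS] at this
    exact this
  nlinarith [norm_nonneg S, hSS, hTnorm]

lemma aux_cfc_norm_le (S : H →L[ℝ] H) (hS : IsSelfAdjoint S) (h : ℝ → ℝ)
    (hcont : ContinuousOn h (spectrum ℝ S)) {M : ℝ} (hM : 0 ≤ M)
    (hbd : ∀ t ∈ spectrum ℝ S, |h t| ≤ M) : ‖cfc h S‖ ≤ M := by
  apply aux_sa_norm_le (cfc h S) (cfc_predicate h S) hM
  intro t ht
  rw [cfc_map_spectrum h S hS hcont] at ht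
  obtain ⟨s, hs, rfl⟩ := ht
  exact hbd s hs

variable {K : Type*} [NormedAddCommGroup K] [InnerProductSpace ℝ K] [CompleteSpace K]

lemma aux_B_inner (A : H →L[ℝ] K) (x : H) : ⟪(adjoint A ∘L A) x, x⟫ = ‖A x‖ ^ 2 := by
  rw [ContinuousLinearMap.comp_apply, ContinuousLinearMap.adjoint_inner_left,
    real_inner_self_eq_norm_sq]

lemma aux_spec_mem (A : H →L[ℝ] K) [Nontrivial H] {t : ℝ}
    (ht : t ∈ spectrum ℝ (adjoint A ∘L A)) : t ∈ Set.Icc 0 ‖adjoint A ∘L A‖ := by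
  set B : H →L[ℝ] H := adjoint A ∘L A with hB
  have hub : t ≤ ‖B‖ := le_trans (le_abs_self t) (spectrum.norm_le_norm_of_mem ht)
  refine ⟨?_, hub⟩
  by_contra hneg
  push_neg at hneg
  set E : H →L[ℝ] H := algebraMap ℝ (H →L[ℝ] H) t - B with hE
  have hEapp : ∀ x : H, E x = t • x - B x := by
    intro x
    simp [hE, Algebra.algebraMap_eq_smul_one, ContinuousLinearMap.sub_apply,
      ContinuousLinearMap.smul_apply, ContinuousLinearMap.one_apply]
  have hEinner : ∀ x : H, ⟪E x, x⟫ = t * ‖x‖ ^ 2 - ‖A x‖ ^ 2 := by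
    intro x
    rw [hEapp, inner_sub_left, real_inner_smul_left, real_inner_self_eq_norm_sq,
      aux_B_inner A x]
  have hlow : ∀ x : H, (-t) * ‖x‖ ≤ ‖E x‖ := by
    intro x
    rcases eq_or_ne x 0 with rfl | hx
    · simp
    · have hnx : (0:ℝ) < ‖x‖ := norm_pos_iff.mpr hx
      have h1 : (-t) * ‖x‖ ^ 2 ≤ -⟪E x, x⟫ := by
        rw [hEinner]
        nlinarith [sq_nonneg (‖A x‖ : ℝ)]
      have h2 : -⟪E x, x⟫ ≤ ‖E x‖ * ‖x‖ := by
        have := abs_real_inner_le_norm (E x) x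
        cases' abs_le.mp this with hl hr
        linarith
      have := le_trans h1 h2
      nlinarith [this, hnx]
  have hanti : AntilipschitzWith (Real.toNNReal (-t)⁻¹) E := by
    apply E.antilipschitz_of_bound
    intro x
    have htpos : (0:ℝ) < -t := by linarith
    have hc : (Real.toNNReal (-t)⁻¹ : ℝ) = (-t)⁻¹ := Real.coe_toNNReal _ (by positivity)
    rw [hc]
    have h := hlow x
    rw [inv_mul_eq_div, le_div_iff₀ htpos]
    linarith [h]
  have hEsa : IsSelfAdjoint E := by
    apply IsSelfAdjoint.sub
    · exact IsSelfAdjoint.algebraMap _ (isSelfAdjoint_iff.mpr rfl)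
    · rw [ContinuousLinearMap.isSelfAdjoint_iff']
      rw [ContinuousLinearMap.adjoint_comp, ContinuousLinearMap.adjoint_adjoint]
  have hEsym : ∀ x y : H, ⟪E x, y⟫ = ⟪x, E y⟫ := by
    intro x y
    rw [ContinuousLinearMap.isSelfAdjoint_iff'] at hEsa
    conv_lhs => rw [← hEsa]
    rw [ContinuousLinearMap.adjoint_inner_left]
  have hdense : (E.range)ᗮ = ⊥ := by
    rw [Submodule.eq_bot_iff]
    intro y hy
    have hEy : E y = 0 := by
      have h1 : ∀ x : H, ⟪x, E y⟫ = 0 := by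
        intro x
        rw [← hEsym]
        exact (Submodule.mem_orthogonal _ y).mp hy (E x) (LinearMap.mem_range_self _ x)
      have := h1 (E y)
      exact inner_self_eq_zero.mp this
    have := hlow y
    rw [hEy, norm_zero] at this
    have htpos : (0:ℝ) < -t := by linarith
    have : ‖y‖ ≤ 0 := by nlinarith [norm_nonneg y]
    exact norm_le_zero_iff.mp this
  have hbij : Function.Bijective E := by
    rw [ContinuousLinearMap.bijective_iff_dense_range_and_antilipschitz]
    constructor
    · rw [← Submodule.orthogonal_orthogonal_eq_closure, hdense,
        Submodule.bot_orthogonal_eq_top]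
    · exact ⟨_, hanti⟩
  have : IsUnit (algebraMap ℝ (H →L[ℝ] H) t - B) :=
    ContinuousLinearMap.isUnit_iff_bijective.mpr hbij
  rw [spectrum.mem_iff] at ht
  exact ht this

end merged_aux

lemma aux_arith (μ ρ δ d₁ d₂ Kc c₁ α : ℝ) (hμ : 0 < μ) (hρ : 0 < ρ) (hδ : 0 < δ)
    (hd₁ : 0 < d₁) (hd₂ : 0 < d₂) (hKc : 0 < Kc) (hc₁ : 0 < c₁)
    (hα1 : d₁ * (δ / ρ) ^ (2 / (2 * μ + 1)) ≤ α)
    (hα2 : α ≤ d₂ * (δ / ρ) ^ (2 / (2 * μ + 1))) :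
    Real.sqrt (Kc / α) * δ + c₁ * α ^ μ * ρ ≤
      (Real.sqrt (Kc / d₁) + c₁ * d₂ ^ μ) * δ ^ (2 * μ / (2 * μ + 1)) * ρ ^ (1 / (2 * μ + 1)) := by
  have h2μ : (0:ℝ) < 2 * μ + 1 := by linarith
  have hδρ : (0:ℝ) < δ / ρ := div_pos hδ hρ
  set e : ℝ := 2 / (2 * μ + 1) with he
  set s : ℝ := 1 / (2 * μ + 1) with hs
  set m2 : ℝ := 2 * μ / (2 * μ + 1) with hm2
  have hsm : m2 + s = 1 := by rw [hm2, hs]; field_simp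
  set q : ℝ := (δ / ρ) ^ e with hq
  have hqpos : 0 < q := Real.rpow_pos_of_pos hδρ _
  have hαpos : 0 < α := lt_of_lt_of_le (by positivity) hα1
  set X : ℝ := δ ^ s with hX
  set Y : ℝ := ρ ^ s with hY
  set Z : ℝ := δ ^ m2 with hZ
  set W : ℝ := ρ ^ m2 with hW
  have hXpos : 0 < X := Real.rpow_pos_of_pos hδ _
  have hYpos : 0 < Y := Real.rpow_pos_of_pos hρ _
  have hZpos : 0 < Z := Real.rpow_pos_of_pos hδ _
  have hWpos : 0 < W := Real.rpow_pos_of_pos hρ _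
  have hZX : Z * X = δ := by
    rw [hZ, hX, ← Real.rpow_add hδ, hsm, Real.rpow_one]
  have hWY : W * Y = ρ := by
    rw [hW, hY, ← Real.rpow_add hρ, hsm, Real.rpow_one]
  have hes : e * (1 / 2) = s := by rw [he, hs]; ring
  have hsqrtq : Real.sqrt q = X / Y := by
    rw [hq, Real.sqrt_eq_rpow, ← Real.rpow_mul hδρ.le, hes, Real.div_rpow hδ.le hρ.le]
  have heμ : e * μ = m2 := by rw [he, hm2]; ring
  have hqμ : q ^ μ = Z / W := by
    rw [hq, ← Real.rpow_mul hδρ.le, heμ, Real.div_rpow hδ.le hρ.le]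
  have hA : Real.sqrt (Kc / α) * δ ≤ Real.sqrt (Kc / d₁) * Z * Y := by
    have h1 : Kc / α ≤ Kc / d₁ / q := by
      rw [div_div]
      exact div_le_div_of_nonneg_left hKc.le (by positivity) hα1
    have h2 : Real.sqrt (Kc / α) ≤ Real.sqrt (Kc / d₁) / (X / Y) := by
      rw [← hsqrtq, ← Real.sqrt_div (by positivity : (0:ℝ) ≤ Kc / d₁)]
      exact Real.sqrt_le_sqrt h1
    calc Real.sqrt (Kc / α) * δ ≤ (Real.sqrt (Kc / d₁) / (X / Y)) * δ := by
          apply mul_le_mul_of_nonneg_right h2 hδ.le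
      _ = Real.sqrt (Kc / d₁) * Z * Y := by
          rw [← hZX]; field_simp
  have hB : c₁ * α ^ μ * ρ ≤ (c₁ * d₂ ^ μ) * Z * Y := by
    have h1 : α ^ μ ≤ (d₂ * q) ^ μ := Real.rpow_le_rpow hαpos.le hα2 hμ.le
    have h2 : (d₂ * q) ^ μ = d₂ ^ μ * (Z / W) := by
      rw [Real.mul_rpow hd₂.le hqpos.le, hqμ]
    calc c₁ * α ^ μ * ρ ≤ c₁ * (d₂ ^ μ * (Z / W)) * ρ := by
          rw [← h2]
          exact mul_le_mul_of_nonneg_right (mul_le_mul_of_nonneg_left h1 hc₁.le) hρ.le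
      _ = (c₁ * d₂ ^ μ) * Z * Y := by
          rw [← hWY]; field_simp
  calc Real.sqrt (Kc / α) * δ + c₁ * α ^ μ * ρ
      ≤ Real.sqrt (Kc / d₁) * Z * Y + (c₁ * d₂ ^ μ) * Z * Y := add_le_add hA hB
    _ = (Real.sqrt (Kc / d₁) + c₁ * d₂ ^ μ) * Z * Y := by ring

lemma aux_gbound {c₁ c₂ α μ t gt : ℝ} (hc₁ : 0 < c₁) (hc₂ : 0 < c₂) (hα : 0 < α)
    (hμ : 0 < μ) (ht : 0 ≤ t)
    (h1 : t ^ μ * |1 - t * gt| ≤ c₁ * α ^ μ) (h2 : |gt| ≤ c₂ / α) :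
    |gt * (t * gt)| ≤ max (c₂ ^ 2) ((1 + c₁) * c₂) / α := by
  rcases le_total t α with hta | hta
  · have habs : |gt * (t * gt)| = t * (|gt| * |gt|) := by
      rw [abs_mul, abs_mul, abs_of_nonneg ht]; ring
    have hg0 : 0 ≤ |gt| := abs_nonneg _
    have hca : 0 ≤ c₂ / α := by positivity
    have hb : t * (|gt| * |gt|) ≤ α * (c₂ / α * (c₂ / α)) := by
      have hgg : |gt| * |gt| ≤ c₂ / α * (c₂ / α) := mul_le_mul h2 h2 hg0 hca
      nlinarith [mul_le_mul_of_nonneg_left hgg ht]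
    have heq : α * (c₂ / α * (c₂ / α)) = c₂ ^ 2 / α := by field_simp
    rw [habs]
    calc t * (|gt| * |gt|) ≤ c₂ ^ 2 / α := by rw [← heq]; exact hb
      _ ≤ max (c₂ ^ 2) ((1 + c₁) * c₂) / α := by gcongr; exact le_max_left _ _
  · have htpos : 0 < t := lt_of_lt_of_le hα hta
    have hαμ : α ^ μ ≤ t ^ μ := Real.rpow_le_rpow hα.le hta hμ.le
    have htμpos : 0 < t ^ μ := Real.rpow_pos_of_pos htpos μ
    have h3 : |1 - t * gt| ≤ c₁ := by
      have hh : t ^ μ * |1 - t * gt| ≤ c₁ * t ^ μ := by nlinarith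
      nlinarith [abs_nonneg (1 - t * gt)]
    have h4 : |t * gt| ≤ 1 + c₁ := by
      rcases abs_le.mp h3 with ⟨hl, hr⟩
      exact abs_le.mpr ⟨by linarith, by linarith⟩
    calc |gt * (t * gt)| = |gt| * |t * gt| := abs_mul _ _
      _ ≤ (c₂ / α) * (1 + c₁) := mul_le_mul h2 h4 (abs_nonneg _) (by positivity)
      _ = (1 + c₁) * c₂ / α := by field_simp
      _ ≤ max (c₂ ^ 2) ((1 + c₁) * c₂) / α := by gcongr; exact le_max_right _ _

/-- Convergence rates for learned regularizations: for a regularizing filter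
`(g_α)` satisfying (R1) `λ^μ |1 - λ g_α(λ)| ≤ c₁ α^μ` and (R2) `‖g_α‖_∞ ≤ c₂/α`
on `[0, ‖A*A‖]`, a parameter choice `α⋆(δ) ≍ (δ/ρ)^(2/(2μ+1))`, and a null-space
network `f = id + P_{ker A} ∘ U`, there is `c > 0` such that for every
`x = f((A*A)^μ w)` with `‖w‖ ≤ ρ` and every `y^δ` with `‖A x - y^δ‖ ≤ δ`,
`‖f(g_{α⋆(δ)}(A*A)(A* y^δ)) - x‖ ≤ c δ^(2μ/(2μ+1)) ρ^(1/(2μ+1))`.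
(Operator functions are taken via the continuous functional calculus of the
selfadjoint operator `A*A`; the real-scalar functional calculus instance for
bounded operators on a real Hilbert space is assumed, as it is a true fact not
yet available in Mathlib.) -/
theorem stmt_13
    {H K : Type*} [NormedAddCommGroup H] [InnerProductSpace ℝ H] [CompleteSpace H]
    [NormedAddCommGroup K] [InnerProductSpace ℝ K] [CompleteSpace K]
    [ContinuousFunctionalCalculus ℝ (H →L[ℝ] H) IsSelfAdjoint]
    (A : H →L[ℝ] K) (hA : A ≠ 0)
    (μ ρ c₁ c₂ : ℝ) (hμ : 0 < μ) (hρ : 0 < ρ) (hc₁ : 0 < c₁) (hc₂ : 0 < c₂)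
    (g : ℝ → ℝ → ℝ)
    (hgcont : ∀ α : ℝ, 0 < α →
      ContinuousOn (g α) (Set.Icc 0 ‖ContinuousLinearMap.adjoint A ∘L A‖))
    (hR1 : ∀ α : ℝ, 0 < α → ∀ lam ∈ Set.Icc 0 ‖ContinuousLinearMap.adjoint A ∘L A‖,
      lam ^ μ * |1 - lam * g α lam| ≤ c₁ * α ^ μ)
    (hR2 : ∀ α : ℝ, 0 < α → ∀ lam ∈ Set.Icc 0 ‖ContinuousLinearMap.adjoint A ∘L A‖,
      |g α lam| ≤ c₂ / α)
    (αstar : ℝ → ℝ) (d₁ d₂ : ℝ) (hd₁ : 0 < d₁) (hd₂ : 0 < d₂)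
    (hαstar : ∀ δ : ℝ, 0 < δ →
      d₁ * (δ / ρ) ^ (2 / (2 * μ + 1)) ≤ αstar δ ∧
      αstar δ ≤ d₂ * (δ / ρ) ^ (2 / (2 * μ + 1)))
    (U : H → H) (L : NNReal) (hU : LipschitzWith L U)
    (f : H → H)
    (hf : ∀ x : H, f x = x + (Submodule.orthogonalProjectionOnto (LinearMap.ker (A : H →ₗ[ℝ] K)) (U x) : H)) :
    ∃ c : ℝ, 0 < c ∧ ∀ w : H, ‖w‖ ≤ ρ →
      ∀ x : H,
        x = f (cfc (fun t : ℝ => t ^ μ) (ContinuousLinearMap.adjoint A ∘L A) w) →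
        ∀ δ : ℝ, 0 < δ → ∀ yδ : K, ‖A x - yδ‖ ≤ δ →
          ‖f (cfc (g (αstar δ)) (ContinuousLinearMap.adjoint A ∘L A)
              (ContinuousLinearMap.adjoint A yδ)) - x‖ ≤
            c * δ ^ (2 * μ / (2 * μ + 1)) * ρ ^ (1 / (2 * μ + 1)) := by
  haveI hNT : Nontrivial H := by
    by_contra hcon
    rw [not_nontrivial_iff_subsingleton] at hcon
    refine hA ?_
    ext x
    rw [Subsingleton.elim x (0 : H), map_zero]
    rfl
  set B : H →L[ℝ] H := ContinuousLinearMap.adjoint A ∘L A with hB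
  have hBsa : IsSelfAdjoint B := by
    rw [ContinuousLinearMap.isSelfAdjoint_iff', hB, ContinuousLinearMap.adjoint_comp,
      ContinuousLinearMap.adjoint_adjoint]
  have hspec : ∀ t ∈ spectrum ℝ B, t ∈ Set.Icc 0 ‖B‖ := fun t ht => aux_spec_mem A ht
  set Kc : ℝ := max (c₂ ^ 2) ((1 + c₁) * c₂) with hKc
  have hKcpos : 0 < Kc := lt_max_of_lt_left (by positivity)
  have hCpos : 0 < (1 + (L : ℝ)) * (Real.sqrt (Kc / d₁) + c₁ * d₂ ^ μ) := by
    have h1 : (0:ℝ) < Real.sqrt (Kc / d₁) := Real.sqrt_pos.mpr (by positivity)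
    have h2 : (0:ℝ) < c₁ * d₂ ^ μ := by positivity
    have h3 : (0:ℝ) < 1 + (L : ℝ) := by positivity
    positivity
  refine ⟨(1 + (L : ℝ)) * (Real.sqrt (Kc / d₁) + c₁ * d₂ ^ μ), hCpos, ?_⟩
  intro w hw x hx δ hδ yδ hy
  obtain ⟨hα1, hα2⟩ := hαstar δ hδ
  set α : ℝ := αstar δ with hαdef
  have hqpos : (0:ℝ) < (δ / ρ) ^ (2 / (2 * μ + 1)) :=
    Real.rpow_pos_of_pos (div_pos hδ hρ) _
  have hαpos : 0 < α := lt_of_lt_of_le (by positivity) hα1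
  -- continuity facts
  have hgc : ContinuousOn (g α) (spectrum ℝ B) := (hgcont α hαpos).mono hspec
  have hrpc : ContinuousOn (fun t : ℝ => t ^ μ) (spectrum ℝ B) := by
    apply Continuous.continuousOn
    rw [continuous_iff_continuousAt]
    exact fun t => Real.continuousAt_rpow_const t μ (Or.inr hμ.le)
  have hidc : ContinuousOn (fun t : ℝ => t) (spectrum ℝ B) := continuousOn_id
  set b : H := cfc (fun t : ℝ => t ^ μ) B w with hb
  set R : H →L[ℝ] H := cfc (g α) B with hR
  have hRsa : IsSelfAdjoint R := cfc_predicate _ _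
  set u : H := R (ContinuousLinearMap.adjoint A yδ) with hu
  -- A x = A b
  have hAx : A x = A b := by
    rw [hx, hf b, map_add,
      (show A (Submodule.orthogonalProjectionOnto (LinearMap.ker (A : H →ₗ[ℝ] K)) (U b) : H) = 0 from LinearMap.mem_ker.mp (SetLike.coe_mem (Submodule.orthogonalProjectionOnto (LinearMap.ker (A : H →ₗ[ℝ] K)) (U b)))),
      add_zero]
  -- operator identities
  have hmul1 : cfc (fun t : ℝ => g α t * t) B = R * B := by
    rw [cfc_mul (g α) (fun t : ℝ => t) B hgc hidc, cfc_id' ℝ B hBsa]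
  have hgtc : ContinuousOn (fun t : ℝ => g α t * t) (spectrum ℝ B) := hgc.mul hidc
  have he4 : cfc (fun t : ℝ => g α t * t) B b = cfc (fun t : ℝ => g α t * t * t ^ μ) B w := by
    rw [cfc_mul (fun t : ℝ => g α t * t) (fun t : ℝ => t ^ μ) B hgtc hrpc,
      ContinuousLinearMap.mul_apply]
  have he5 : cfc (fun t : ℝ => g α t * t * t ^ μ) B w - b
      = cfc (fun t : ℝ => g α t * t * t ^ μ - t ^ μ) B w := by
    rw [cfc_sub (fun t : ℝ => g α t * t * t ^ μ) (fun t : ℝ => t ^ μ) B (hgtc.mul hrpc) hrpc,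
      ContinuousLinearMap.sub_apply]
  have hsplit : u - b = R (ContinuousLinearMap.adjoint A (yδ - A x))
      + cfc (fun t : ℝ => g α t * t * t ^ μ - t ^ μ) B w := by
    have e0 : yδ = (yδ - A x) + A x := by abel
    have e1 : ContinuousLinearMap.adjoint A yδ
        = ContinuousLinearMap.adjoint A (yδ - A x) + B b := by
      conv_lhs => rw [e0]
      rw [map_add, hAx]
      rfl
    rw [hu, e1, map_add]
    have e2 : R (B b) = cfc (fun t : ℝ => g α t * t) B b := by
      rw [← ContinuousLinearMap.mul_apply, ← hmul1]
    rw [e2, he4]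
    rw [← he5]
    abel
  -- norm bound for first term
  have hn1 : ‖R (ContinuousLinearMap.adjoint A (yδ - A x))‖ ≤ Real.sqrt (Kc / α) * δ := by
    set T : K →L[ℝ] H := R ∘L ContinuousLinearMap.adjoint A with hT
    have hadjT : ContinuousLinearMap.adjoint T = A ∘L R := by
      rw [hT, ContinuousLinearMap.adjoint_comp, ContinuousLinearMap.adjoint_adjoint,
        ContinuousLinearMap.isSelfAdjoint_iff'.mp hRsa]
    have hTT : T ∘L ContinuousLinearMap.adjoint T
        = cfc (fun t : ℝ => g α t * (t * g α t)) B := by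
      have hrhs : cfc (fun t : ℝ => g α t * (t * g α t)) B = R * (B * R) := by
        rw [cfc_mul (g α) (fun t : ℝ => t * g α t) B hgc (hidc.mul hgc),
          cfc_mul (fun t : ℝ => t) (g α) B hidc hgc, cfc_id' ℝ B hBsa]
      rw [hrhs, hadjT]
      ext v
      simp only [ContinuousLinearMap.comp_apply, ContinuousLinearMap.mul_apply]
      rfl
    have hTTnorm : ‖T ∘L ContinuousLinearMap.adjoint T‖ ≤ Kc / α := by
      rw [hTT]
      apply aux_cfc_norm_le B hBsa _ (hgc.mul (hidc.mul hgc)) (by positivity)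
      intro t ht
      obtain ⟨ht0, htB⟩ := hspec t ht
      exact aux_gbound hc₁ hc₂ hαpos hμ ht0
        (hR1 α hαpos t ⟨ht0, htB⟩) (hR2 α hαpos t ⟨ht0, htB⟩)
    have hTnormsq : ‖T‖ * ‖T‖ = ‖T ∘L ContinuousLinearMap.adjoint T‖ := by
      have h1 := ContinuousLinearMap.norm_adjoint_comp_self (ContinuousLinearMap.adjoint T)
      rw [ContinuousLinearMap.adjoint_adjoint] at h1
      rw [h1, LinearIsometryEquiv.norm_map]
    have hTnorm : ‖T‖ ≤ Real.sqrt (Kc / α) := by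
      rw [Real.le_sqrt (norm_nonneg T) (by positivity)]
      rw [sq]
      rw [hTnormsq]
      exact hTTnorm
    calc ‖R (ContinuousLinearMap.adjoint A (yδ - A x))‖ = ‖T (yδ - A x)‖ := rfl
      _ ≤ ‖T‖ * ‖yδ - A x‖ := T.le_opNorm _
      _ ≤ Real.sqrt (Kc / α) * δ := by
          have : ‖yδ - A x‖ ≤ δ := by rw [norm_sub_rev]; exact hy
          exact mul_le_mul hTnorm this (norm_nonneg _) (Real.sqrt_nonneg _)
  -- norm bound for second term
  have hn2 : ‖cfc (fun t : ℝ => g α t * t * t ^ μ - t ^ μ) B w‖ ≤ c₁ * α ^ μ * ρ := by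
    have hopn : ‖cfc (fun t : ℝ => g α t * t * t ^ μ - t ^ μ) B‖ ≤ c₁ * α ^ μ := by
      apply aux_cfc_norm_le B hBsa (fun t : ℝ => g α t * t * t ^ μ - t ^ μ) ((hgtc.mul hrpc).sub hrpc) (by positivity)
      intro t ht
      obtain ⟨ht0, htB⟩ := hspec t ht
      have heq : g α t * t * t ^ μ - t ^ μ = -((1 - t * g α t) * t ^ μ) := by ring
      rw [heq, abs_neg, abs_mul, abs_of_nonneg (Real.rpow_nonneg ht0 μ), mul_comm]
      exact hR1 α hαpos t ⟨ht0, htB⟩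
    calc ‖cfc (fun t : ℝ => g α t * t * t ^ μ - t ^ μ) B w‖
        ≤ ‖cfc (fun t : ℝ => g α t * t * t ^ μ - t ^ μ) B‖ * ‖w‖ :=
          ContinuousLinearMap.le_opNorm _ _
      _ ≤ (c₁ * α ^ μ) * ρ := by
          apply mul_le_mul hopn hw (norm_nonneg _) (by positivity)
  have hub : ‖u - b‖ ≤ Real.sqrt (Kc / α) * δ + c₁ * α ^ μ * ρ := by
    rw [hsplit]
    exact le_trans (norm_add_le _ _) (add_le_add hn1 hn2)
  have harith := aux_arith μ ρ δ d₁ d₂ Kc c₁ α hμ hρ hδ hd₁ hd₂ hKcpos hc₁ hα1 hα2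
  -- Lipschitz step
  have hflip : ‖f u - x‖ ≤ (1 + (L : ℝ)) * ‖u - b‖ := by
    rw [hx, hf u, hf b]
    have hsplit2 : u + (Submodule.orthogonalProjectionOnto (LinearMap.ker (A : H →ₗ[ℝ] K)) (U u) : H)
        - (b + (Submodule.orthogonalProjectionOnto (LinearMap.ker (A : H →ₗ[ℝ] K)) (U b) : H))
        = (u - b) + ((Submodule.orthogonalProjectionOnto (LinearMap.ker (A : H →ₗ[ℝ] K)) (U u) : H)
          - (Submodule.orthogonalProjectionOnto (LinearMap.ker (A : H →ₗ[ℝ] K)) (U b) : H)) := by abel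
    rw [hsplit2]
    have hp : ‖(Submodule.orthogonalProjectionOnto (LinearMap.ker (A : H →ₗ[ℝ] K)) (U u) : H)
        - (Submodule.orthogonalProjectionOnto (LinearMap.ker (A : H →ₗ[ℝ] K)) (U b) : H)‖ ≤ (L : ℝ) * ‖u - b‖ := by
      have h1 : (Submodule.orthogonalProjectionOnto (LinearMap.ker (A : H →ₗ[ℝ] K)) (U u) : H)
          - (Submodule.orthogonalProjectionOnto (LinearMap.ker (A : H →ₗ[ℝ] K)) (U b) : H)
          = (Submodule.orthogonalProjectionOnto (LinearMap.ker (A : H →ₗ[ℝ] K)) (U u - U b) : H) := by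
        rw [map_sub]
        rfl
      rw [h1]
      have h2 : ‖(Submodule.orthogonalProjectionOnto (LinearMap.ker (A : H →ₗ[ℝ] K)) (U u - U b) : H)‖
          ≤ ‖U u - U b‖ := by
        have h3 := ContinuousLinearMap.le_opNorm (Submodule.orthogonalProjectionOnto (LinearMap.ker (A : H →ₗ[ℝ] K)))
          (U u - U b)
        have h4 := Submodule.orthogonalProjectionOnto_norm_le (LinearMap.ker (A : H →ₗ[ℝ] K))
        calc ‖(Submodule.orthogonalProjectionOnto (LinearMap.ker (A : H →ₗ[ℝ] K)) (U u - U b) : H)‖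
            = ‖Submodule.orthogonalProjectionOnto (LinearMap.ker (A : H →ₗ[ℝ] K)) (U u - U b)‖ := rfl
          _ ≤ ‖Submodule.orthogonalProjectionOnto (LinearMap.ker (A : H →ₗ[ℝ] K))‖ * ‖U u - U b‖ := h3
          _ ≤ 1 * ‖U u - U b‖ := by
              apply mul_le_mul_of_nonneg_right h4 (norm_nonneg _)
          _ = ‖U u - U b‖ := one_mul _
      have h5 : ‖U u - U b‖ ≤ (L : ℝ) * ‖u - b‖ := by
        have := hU.dist_le_mul u b
        rwa [dist_eq_norm, dist_eq_norm] at this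
      exact le_trans h2 h5
    calc ‖(u - b) + ((Submodule.orthogonalProjectionOnto (LinearMap.ker (A : H →ₗ[ℝ] K)) (U u) : H)
          - (Submodule.orthogonalProjectionOnto (LinearMap.ker (A : H →ₗ[ℝ] K)) (U b) : H))‖
        ≤ ‖u - b‖ + ‖(Submodule.orthogonalProjectionOnto (LinearMap.ker (A : H →ₗ[ℝ] K)) (U u) : H)
          - (Submodule.orthogonalProjectionOnto (LinearMap.ker (A : H →ₗ[ℝ] K)) (U b) : H)‖ := norm_add_le _ _
      _ ≤ ‖u - b‖ + (L : ℝ) * ‖u - b‖ := by linarith [hp]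
      _ = (1 + (L : ℝ)) * ‖u - b‖ := by ring
  have hL1 : (0:ℝ) ≤ 1 + (L : ℝ) := by positivity
  calc ‖f u - x‖ ≤ (1 + (L : ℝ)) * ‖u - b‖ := hflip
    _ ≤ (1 + (L : ℝ)) * (Real.sqrt (Kc / α) * δ + c₁ * α ^ μ * ρ) :=
        mul_le_mul_of_nonneg_left hub hL1
    _ ≤ (1 + (L : ℝ)) * ((Real.sqrt (Kc / d₁) + c₁ * d₂ ^ μ)
        * δ ^ (2 * μ / (2 * μ + 1)) * ρ ^ (1 / (2 * μ + 1))) := by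
        apply mul_le_mul_of_nonneg_left harith hL1
    _ = (1 + (L : ℝ)) * (Real.sqrt (Kc / d₁) + c₁ * d₂ ^ μ)
        * δ ^ (2 * μ / (2 * μ + 1)) * ρ ^ (1 / (2 * μ + 1)) := by ring
end

section
/- Let H and K be real Hilbert spaces, A : H → K a nonzero bounded linear operator, and τ a real number with 0 < τ < 2/‖A‖². Fix z ∈ H and define the Landweber iteration x₀ = z, x_{k+1} = x_k − τ A*(A x_k). Then the sequence (x_k) converges in norm to P_{ker(A)} z, the orthogonal projection of z onto ker(A). -/
set_option maxHeartbeats 1000000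

open ContinuousLinearMap Filter
open scoped RealInnerProductSpace

/-- Landweber iteration `x₀ = z`, `x_{k+1} = x_k - τ A*(A x_k)` with
`0 < τ < 2/‖A‖²` converges in norm to the orthogonal projection of `z`
onto `ker A`. -/
theorem stmt_15
    {H K : Type*} [NormedAddCommGroup H] [InnerProductSpace ℝ H] [CompleteSpace H]
    [NormedAddCommGroup K] [InnerProductSpace ℝ K] [CompleteSpace K]
    (A : H →L[ℝ] K) (hA : A ≠ 0)
    (τ : ℝ) (hτpos : 0 < τ) (hτlt : τ < 2 / ‖A‖ ^ 2)
    (z : H) (x : ℕ → H) (hx0 : x 0 = z)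
    (hxrec : ∀ k : ℕ, x (k + 1) = x k - τ • (ContinuousLinearMap.adjoint A (A (x k)))) :
    Filter.Tendsto x Filter.atTop
      (nhds ((Submodule.orthogonalProjectionOnto (LinearMap.ker (A : H →ₗ[ℝ] K)) z : H))) := by
  have hAnorm : 0 < ‖A‖ := norm_pos_iff.mpr hA
  set S : H →L[ℝ] H := (ContinuousLinearMap.adjoint A).comp A with hSdef
  set T : H →L[ℝ] H := 1 - τ • S with hTdef
  have hTapp : ∀ v : H, T v = v - τ • S v := by
    intro v; simp [hTdef, sub_apply, smul_apply]
  have hSapp : ∀ v : H, S v = ContinuousLinearMap.adjoint A (A v) := fun v => rfl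
  have hinner : ∀ v : H, (inner ℝ (S v) (v) : ℝ) = ‖A v‖ ^ 2 := by
    intro v
    rw [hSapp, ContinuousLinearMap.adjoint_inner_left, real_inner_self_eq_norm_sq]
  have hadj : ‖ContinuousLinearMap.adjoint A‖ = ‖A‖ :=
    LinearIsometryEquiv.norm_map _ A
  have hSnorm : ∀ v : H, ‖S v‖ ≤ ‖A‖ * ‖A v‖ := by
    intro v
    calc ‖S v‖ ≤ ‖ContinuousLinearMap.adjoint A‖ * ‖A v‖ := (ContinuousLinearMap.adjoint A).le_opNorm _
    _ = ‖A‖ * ‖A v‖ := by rw [hadj]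
  set c : ℝ := τ * (2 - τ * ‖A‖ ^ 2) with hcdef
  have hc : 0 < c := by
    apply mul_pos hτpos
    have : τ * ‖A‖ ^ 2 < 2 := by
      rw [div_eq_mul_inv] at hτlt
      have := (lt_div_iff₀ (by positivity : (0:ℝ) < ‖A‖ ^ 2)).mp (by rw [div_eq_mul_inv]; exact hτlt)
      linarith
    linarith
  have hkey : ∀ v : H, ‖T v‖ ^ 2 + c * ‖A v‖ ^ 2 ≤ ‖v‖ ^ 2 := by
    intro v
    have h1 : ‖T v‖ ^ 2 = ‖v‖ ^ 2 - 2 * (inner ℝ (v) (τ • S v) : ℝ) + ‖τ • S v‖ ^ 2 := by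
      rw [hTapp]; exact norm_sub_sq_real v (τ • S v)
    have h2 : (inner ℝ (v) (τ • S v) : ℝ) = τ * ‖A v‖ ^ 2 := by
      rw [real_inner_smul_right, real_inner_comm, hinner]
    have h3 : ‖τ • S v‖ ^ 2 ≤ τ ^ 2 * (‖A‖ * ‖A v‖) ^ 2 := by
      rw [norm_smul, Real.norm_eq_abs, abs_of_pos hτpos]
      have h := hSnorm v
      nlinarith [mul_le_mul_of_nonneg_left
        (mul_self_le_mul_self (norm_nonneg (S v)) h) (sq_nonneg τ)]
    rw [h1, h2]
    have hAv : (0:ℝ) ≤ ‖A v‖ ^ 2 := by positivity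
    nlinarith [sq_nonneg (‖A v‖)]
  have hcontract : ∀ v : H, ‖T v‖ ≤ ‖v‖ := by
    intro v
    have h := hkey v
    have h2 : ‖T v‖ ^ 2 ≤ ‖v‖ ^ 2 := by nlinarith [sq_nonneg (‖A v‖), mul_nonneg hc.le (sq_nonneg (‖A v‖))]
    nlinarith [norm_nonneg (T v), norm_nonneg v]
  have hpow : ∀ (k : ℕ) (v : H), ‖(T ^ k) v‖ ≤ ‖v‖ := by
    intro k
    induction k with
    | zero => intro v; simp
    | succ n ih =>
      intro v
      have : (T ^ (n + 1)) v = (T ^ n) (T v) := by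
        rw [pow_succ]; rfl
      rw [this]
      exact le_trans (ih (T v)) (hcontract v)
  -- A (T^k v) → 0
  have hAiter : ∀ v : H, Tendsto (fun k => A ((T ^ k) v)) atTop (nhds 0) := by
    intro v
    set a : ℕ → ℝ := fun k => ‖(T ^ k) v‖ ^ 2 with hadef
    have hsucc : ∀ k, (T ^ (k + 1)) v = T ((T ^ k) v) := by
      intro k; rw [pow_succ']; rfl
    have hanti : Antitone a := by
      apply antitone_nat_of_succ_le
      intro k
      have h := hcontract ((T ^ k) v)
      have hak : a k = ‖(T ^ k) v‖ ^ 2 := rfl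
      have : a (k+1) = ‖T ((T ^ k) v)‖ ^ 2 := by rw [hadef]; simp [hsucc k]
      rw [this, hak]
      nlinarith [norm_nonneg (T ((T^k) v)), norm_nonneg ((T^k) v)]
    have hbdd : BddBelow (Set.range a) := ⟨0, by rintro _ ⟨k, rfl⟩; positivity⟩
    have hconv : Tendsto a atTop (nhds (⨅ k, a k)) := tendsto_atTop_ciInf hanti hbdd
    have hconv' : Tendsto (fun k => a (k + 1)) atTop (nhds (⨅ k, a k)) :=
      hconv.comp (tendsto_add_atTop_nat 1)
    have hdiff : Tendsto (fun k => a k - a (k + 1)) atTop (nhds 0) := by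
      have := hconv.sub hconv'
      simpa using this
    have hsq : Tendsto (fun k => ‖A ((T ^ k) v)‖ ^ 2) atTop (nhds 0) := by
      have hb : ∀ k, ‖A ((T ^ k) v)‖ ^ 2 ≤ c⁻¹ * (a k - a (k + 1)) := by
        intro k
        have hk := hkey ((T ^ k) v)
        have hak : a k = ‖(T ^ k) v‖ ^ 2 := rfl
        have hak1 : a (k + 1) = ‖T ((T ^ k) v)‖ ^ 2 := by rw [hadef]; simp [hsucc k]
        rw [inv_mul_eq_div, le_div_iff₀ hc, hak, hak1]
        nlinarith
      apply squeeze_zero (fun k => by positivity) hb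
      simpa using hdiff.const_mul c⁻¹
    rw [tendsto_zero_iff_norm_tendsto_zero]
    have hs := hsq.sqrt
    simp only [Real.sqrt_zero] at hs
    exact hs.congr fun k => Real.sqrt_sq (norm_nonneg _)
  -- T^k (S u) → 0
  have hTS : ∀ u : H, T (S u) = S (T u) := by
    intro u; rw [hTapp, hTapp, map_sub, map_smul]
  have hc2 : ∀ (k : ℕ) (u : H), (T ^ k) (S u) = S ((T ^ k) u) := by
    intro k
    induction k with
    | zero => intro u; simp
    | succ n ih =>
      intro u
      have h1 : (T ^ (n+1)) (S u) = (T ^ n) (T (S u)) := by rw [pow_succ]; rfl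
      have h2 : (T ^ (n+1)) u = (T ^ n) (T u) := by rw [pow_succ]; rfl
      rw [h1, hTS, ih (T u), h2]
  have hrange : ∀ u : H, Tendsto (fun k => (T ^ k) (S u)) atTop (nhds 0) := by
    intro u
    simp only [fun k => hc2 k u]
    rw [tendsto_zero_iff_norm_tendsto_zero]
    apply squeeze_zero (fun k => norm_nonneg _) (fun k => hSnorm ((T ^ k) u))
    have := (hAiter u)
    rw [tendsto_zero_iff_norm_tendsto_zero] at this
    simpa using this.const_mul ‖A‖
  -- closure of range S is (ker A)ᗮ
  have hker : (LinearMap.range (S : H →ₗ[ℝ] H))ᗮ = LinearMap.ker (A : H →ₗ[ℝ] K) := by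
    ext v
    simp only [Submodule.mem_orthogonal, LinearMap.mem_range, LinearMap.mem_ker]
    constructor
    · intro h
      have := h (S v) ⟨v, rfl⟩
      have h2 : ‖A v‖ ^ 2 = 0 := by
        rw [← hinner v]; exact this
      have : ‖A v‖ = 0 := by nlinarith [norm_nonneg (A v)]
      exact norm_eq_zero.mp this
    · rintro hv u ⟨w, rfl⟩
      show (inner ℝ (S w) (v) : ℝ) = 0
      rw [hSapp, ContinuousLinearMap.adjoint_inner_left, (show A v = 0 from hv), inner_zero_right]
  have hmemcl : ∀ w : H, w ∈ (LinearMap.ker (A : H →ₗ[ℝ] K))ᗮ →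
      w ∈ closure ((LinearMap.range (S : H →ₗ[ℝ] H) : Submodule ℝ H) : Set H) := by
    intro w hw
    have h1 : (LinearMap.ker (A : H →ₗ[ℝ] K))ᗮ = (LinearMap.range (S : H →ₗ[ℝ] H)).topologicalClosure := by
      rw [← hker, Submodule.orthogonal_orthogonal_eq_closure]
    rw [h1] at hw
    rw [← Submodule.topologicalClosure_coe]
    exact hw
  -- T^k w → 0 for w ⊥ ker A
  have hzero : ∀ w : H, w ∈ (LinearMap.ker (A : H →ₗ[ℝ] K))ᗮ →
      Tendsto (fun k => (T ^ k) w) atTop (nhds 0) := by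
    intro w hw
    rw [NormedAddCommGroup.tendsto_nhds_zero]
    intro ε hε
    obtain ⟨y, hy, hyd⟩ := Metric.mem_closure_iff.mp (hmemcl w hw) (ε / 2) (by linarith)
    obtain ⟨u, rfl⟩ := hy
    have := hrange u
    rw [NormedAddCommGroup.tendsto_nhds_zero] at this
    filter_upwards [this (ε / 2) (by linarith)] with k hk
    have h1 : ‖(T ^ k) w‖ ≤ ‖(T ^ k) (w - S u)‖ + ‖(T ^ k) (S u)‖ := by
      have : (T ^ k) w = (T ^ k) (w - S u) + (T ^ k) (S u) := by
        rw [← map_add, sub_add_cancel]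
      rw [this]; exact norm_add_le _ _
    have h2 : ‖(T ^ k) (w - S u)‖ ≤ ‖w - S u‖ := hpow k _
    have h3 : ‖w - S u‖ < ε / 2 := by
      rw [← dist_eq_norm]; exact hyd
    calc ‖(T ^ k) w‖ ≤ ‖(T ^ k) (w - S u)‖ + ‖(T ^ k) (S u)‖ := h1
      _ < ε / 2 + ε / 2 := by
          apply add_lt_add_of_le_of_lt (le_trans h2 h3.le) hk
      _ = ε := by ring
  -- final assembly
  set p : H := (Submodule.orthogonalProjectionOnto (LinearMap.ker (A : H →ₗ[ℝ] K)) z : H) with hpdef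
  have hpker : p ∈ LinearMap.ker (A : H →ₗ[ℝ] K) := (Submodule.orthogonalProjectionOnto (LinearMap.ker (A : H →ₗ[ℝ] K)) z).2
  have hw : z - p ∈ (LinearMap.ker (A : H →ₗ[ℝ] K))ᗮ := Submodule.sub_starProjection_mem_orthogonal z
  have hAp : A p = 0 := LinearMap.mem_ker.mp hpker
  have hTp : ∀ k : ℕ, (T ^ k) p = p := by
    intro k
    induction k with
    | zero => simp
    | succ n ih =>
      have h1 : (T ^ (n+1)) p = (T ^ n) (T p) := by rw [pow_succ]; rfl
      have hTp1 : T p = p := by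
        rw [hTapp, hSapp, hAp]
        simp
      rw [h1, hTp1, ih]
  have hxk : ∀ k, x k = (T ^ k) z := by
    intro k
    induction k with
    | zero => simpa using hx0
    | succ n ih =>
      rw [hxrec n, ih]
      have h2 : (T ^ (n+1)) z = T ((T ^ n) z) := by rw [pow_succ']; rfl
      rw [h2, hTapp, hSapp]
  have hlim : Tendsto (fun k => (T ^ k) z) atTop (nhds p) := by
    have hdecomp : ∀ k, (T ^ k) z = p + (T ^ k) (z - p) := by
      intro k
      rw [map_sub, hTp k]
      abel
    simp only [hdecomp]
    have := (hzero (z - p) hw).const_add p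
    simpa using this
  exact hlim.congr fun k => (hxk k).symm
end

section
/- Let X be a reflexive, strictly convex real Banach space satisfying the Radon–Riesz property, Y a real Banach space, A : X → Y a bounded linear operator, and let p, q > 1 and α > 0. Then for every y ∈ Y the Tikhonov functional x ↦ ‖A x − y‖^p + α ‖x‖^q has a unique minimizer B_α(y) ∈ X, and the resulting map B_α : Y → X is continuous. -/
section TikAux

open Filter Topology Metric Set NormedSpace

variable {X Y : Type*} [NormedAddCommGroup X] [NormedSpace ℝ X] [NormedAddCommGroup Y] [NormedSpace ℝ Y]

private lemma tik_cont_eval (φ : X →L[ℝ] ℝ) :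
    Continuous fun w : WeakSpace ℝ X => φ ((toWeakSpace ℝ X).symm w) :=
  WeakBilin.eval_continuous _ φ

private noncomputable def tik_J : WeakSpace ℝ X → WeakDual ℝ (StrongDual ℝ X) :=
  fun w => inclusionInDoubleDual ℝ X ((toWeakSpace ℝ X).symm w)

private lemma tik_inducing : Topology.IsInducing (tik_J (X := X)) := by
  constructor
  rw [show (instTopologicalSpaceWeakDual ℝ (StrongDual ℝ X) : TopologicalSpace (WeakDual ℝ (StrongDual ℝ X)))
      = TopologicalSpace.induced (fun Φ (φ : StrongDual ℝ X) => Φ φ) Pi.topologicalSpace from rfl,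
    induced_compose]
  rfl

private lemma tik_compact (hrefl : Function.Surjective (inclusionInDoubleDual ℝ X)) (r : ℝ) :
    IsCompact {w : WeakSpace ℝ X | ‖(toWeakSpace ℝ X).symm w‖ ≤ r} := by
  rw [tik_inducing.isCompact_iff]
  have himg : tik_J '' {w : WeakSpace ℝ X | ‖(toWeakSpace ℝ X).symm w‖ ≤ r}
      = WeakDual.toStrongDual ⁻¹' closedBall 0 r := by
    ext Φ
    simp only [Set.mem_image, Set.mem_setOf_eq, Set.mem_preimage, mem_closedBall,
      dist_zero_right]
    constructor
    · rintro ⟨x, hx, rfl⟩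
      have : ‖WeakDual.toStrongDual (tik_J x)‖ = ‖(toWeakSpace ℝ X).symm x‖ :=
        (inclusionInDoubleDualLi ℝ (E := X)).norm_map _
      exact ((dist_zero_right (WeakDual.toStrongDual (tik_J x))).trans this).trans_le hx
    · intro hΦ
      obtain ⟨x, hx⟩ := hrefl Φ
      refine ⟨toWeakSpace ℝ X x, ?_, ?_⟩
      · have : ‖inclusionInDoubleDual ℝ X x‖ = ‖x‖ :=
          (inclusionInDoubleDualLi ℝ (E := X)).norm_map _
        simp only [LinearEquiv.symm_apply_apply]
        rw [← this, hx]; exact (dist_zero_right (WeakDual.toStrongDual Φ)).symm.trans_le hΦ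
      · simp only [tik_J, LinearEquiv.symm_apply_apply, hx]
  rw [himg]
  exact WeakDual.isCompact_closedBall (𝕜 := ℝ) (0 : StrongDual ℝ (StrongDual ℝ X)) r

private lemma tik_lsc_norm_comp (T : X →L[ℝ] Y) (y : Y) :
    LowerSemicontinuous (fun w : WeakSpace ℝ X => ‖T ((toWeakSpace ℝ X).symm w) - y‖) := by
  intro w t ht
  rcases eq_or_ne (T ((toWeakSpace ℝ X).symm w) - y) 0 with h0 | h0
  · have : t < 0 := by simp only [h0, norm_zero] at ht; exact ht
    exact Filter.Eventually.of_forall fun z => lt_of_lt_of_le this (norm_nonneg _)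
  · obtain ⟨ψ, hψ1, hψ2⟩ := exists_dual_vector ℝ _ (norm_ne_zero_iff.mpr h0)
    have hcont : Continuous fun w : WeakSpace ℝ X =>
        (ψ.comp T) ((toWeakSpace ℝ X).symm w) := tik_cont_eval _
    have hopen : IsOpen {w : WeakSpace ℝ X |
        t + ψ y < (ψ.comp T) ((toWeakSpace ℝ X).symm w)} :=
      isOpen_lt continuous_const hcont
    have hmem : w ∈ {w : WeakSpace ℝ X |
        t + ψ y < (ψ.comp T) ((toWeakSpace ℝ X).symm w)} := by
      simp only [Set.mem_setOf_eq, ContinuousLinearMap.comp_apply]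
      have : ψ (T ((toWeakSpace ℝ X).symm w) - y) = ‖T ((toWeakSpace ℝ X).symm w) - y‖ := hψ2
      rw [map_sub] at this
      linarith
    filter_upwards [hopen.mem_nhds hmem] with z hz
    simp only [Set.mem_setOf_eq, ContinuousLinearMap.comp_apply] at hz
    have hle : ψ (T ((toWeakSpace ℝ X).symm z) - y) ≤ ‖T ((toWeakSpace ℝ X).symm z) - y‖ := by
      calc ψ (T ((toWeakSpace ℝ X).symm z) - y) ≤ ‖ψ (T ((toWeakSpace ℝ X).symm z) - y)‖ :=
            le_abs_self _
        _ ≤ ‖ψ‖ * ‖T ((toWeakSpace ℝ X).symm z) - y‖ := ψ.le_opNorm _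
        _ = ‖T ((toWeakSpace ℝ X).symm z) - y‖ := by rw [hψ1, one_mul]
    rw [map_sub] at hle
    linarith

private lemma tik_lsc_rpow {Z : Type*} [TopologicalSpace Z] {g : Z → ℝ}
    (hg : LowerSemicontinuous g) (h0 : ∀ z, 0 ≤ g z) {r : ℝ} (hr : 0 < r) :
    LowerSemicontinuous fun z => g z ^ r := by
  intro z t ht
  rcases lt_or_ge t 0 with htneg | htpos
  · exact Filter.Eventually.of_forall fun w => lt_of_lt_of_le htneg (Real.rpow_nonneg (h0 w) r)
  · have hlt : t ^ r⁻¹ < g z := by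
      have h1 : (t ^ r⁻¹) ^ r = t := Real.rpow_inv_rpow htpos hr.ne'
      by_contra hcon
      push_neg at hcon
      have := Real.rpow_le_rpow (h0 z) hcon hr.le
      rw [h1] at this
      exact absurd (lt_of_lt_of_le ht this) (lt_irrefl _)
    filter_upwards [hg z _ hlt] with w hw
    have : (t ^ r⁻¹) ^ r < g w ^ r :=
      Real.rpow_lt_rpow (Real.rpow_nonneg htpos _) hw hr
    rwa [Real.rpow_inv_rpow htpos hr.ne'] at this

private lemma tik_min_exists {Z : Type*} [TopologicalSpace Z] {S : Set Z} (hS : IsCompact S)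
    (hne : S.Nonempty) {g : Z → ℝ} (hg : LowerSemicontinuous g) (h0 : ∀ z, 0 ≤ g z) :
    ∃ x ∈ S, ∀ z ∈ S, g x ≤ g z := by
  set m := sInf (g '' S) with hm
  have hbdd : BddBelow (g '' S) := ⟨0, by rintro _ ⟨z, _, rfl⟩; exact h0 z⟩
  have hmem : ∀ z ∈ S, m ≤ g z := fun z hz => csInf_le hbdd ⟨z, hz, rfl⟩
  -- minimizing sequence
  have hseq : ∀ n : ℕ, ∃ z ∈ S, g z < m + 1 / (n + 1) := by
    intro n
    have hlt : m < m + 1 / (n + 1) := by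
      have : (0:ℝ) < 1 / (n + 1) := by positivity
      linarith
    obtain ⟨_, ⟨z, hz, rfl⟩, hgz⟩ := exists_lt_of_csInf_lt (hne.image g) hlt
    exact ⟨z, hz, hgz⟩
  choose zs hzs hgzs using hseq
  have hmap : (Filter.map zs Filter.atTop).NeBot := Filter.map_neBot
  set U := Ultrafilter.of (Filter.map zs Filter.atTop) with hU
  have hUle : (U : Filter Z) ≤ Filter.map zs Filter.atTop := Ultrafilter.of_le _
  have hUS : S ∈ U := hUle (by
    rw [Filter.mem_map]
    exact Filter.Eventually.of_forall hzs)
  obtain ⟨x, hxS, hxU⟩ := hS.ultrafilter_le_nhds' U hUS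
  refine ⟨x, hxS, fun z hz => le_trans ?_ (hmem z hz)⟩
  by_contra hcon
  push_neg at hcon
  obtain ⟨t, htm, htx⟩ := exists_between hcon
  have hSU : {w | t < g w} ∈ U := hxU ((hg x t htx))
  have hfreq : ∃ᶠ n in Filter.atTop, t < g (zs n) := by
    by_contra hev
    rw [Filter.not_frequently] at hev
    have : {w | ¬ t < g w} ∈ U := hUle (by rwa [Filter.mem_map])
    exact absurd (U.toFilter.inter_sets hSU this) (by
      show ¬ _
      intro hmemi
      have := Filter.nonempty_of_mem hmemi
      obtain ⟨w, hw1, hw2⟩ := this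
      exact hw2 hw1)
  obtain ⟨n, hn⟩ := (hfreq.and_eventually (Filter.eventually_atTop.mpr
    ⟨Nat.ceil (1 / (t - m)), fun b hb => hb⟩)).exists
  -- t < g (zs n) < m + 1/(n+1), and n ≥ ⌈1/(t-m)⌉
  have h1 : t < m + 1 / (n + 1) := lt_of_lt_of_le hn.1 (hgzs n).le
  have h2 : (1 : ℝ) / (t - m) ≤ n := le_trans (Nat.le_ceil _) (by exact_mod_cast hn.2)
  have htm' : 0 < t - m := sub_pos.mpr htm
  have hn1 : (0:ℝ) < n + 1 := by positivity
  rw [div_le_iff₀ htm'] at h2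
  have : 1 / (n + 1 : ℝ) < t - m := by
    rw [div_lt_iff₀ hn1]
    nlinarith
  linarith

private lemma tik_rpow_sub_tendsto {r M : ℝ} (hr : 0 < r) {a b : ℕ → ℝ}
    (ha0 : ∀ k, 0 ≤ a k) (hb0 : ∀ k, 0 ≤ b k) (haM : ∀ k, a k ≤ M) (hbM : ∀ k, b k ≤ M)
    (h : Filter.Tendsto (fun k => |a k - b k|) Filter.atTop (nhds 0)) :
    Filter.Tendsto (fun k => a k ^ r - b k ^ r) Filter.atTop (nhds 0) := by
  have hcont : ContinuousOn (fun t : ℝ => t ^ r) (Set.Icc 0 M) := by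
    apply Continuous.continuousOn
    rw [continuous_iff_continuousAt]
    intro x
    exact Real.continuousAt_rpow_const x r (Or.inr hr.le)
  have huc : UniformContinuousOn (fun t : ℝ => t ^ r) (Set.Icc 0 M) :=
    isCompact_Icc.uniformContinuousOn_of_continuous hcont
  rw [Metric.uniformContinuousOn_iff] at huc
  rw [Metric.tendsto_atTop] at h ⊢
  intro ε hε
  obtain ⟨δ, hδ, hδ'⟩ := huc ε hε
  obtain ⟨N, hN⟩ := h δ hδ
  refine ⟨N, fun n hn => ?_⟩
  have h1 := hN n hn
  rw [Real.dist_eq, sub_zero, abs_abs] at h1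
  have h2 := hδ' (a n) ⟨ha0 n, haM n⟩ (b n) ⟨hb0 n, hbM n⟩ (by rwa [Real.dist_eq])
  rwa [Real.dist_eq, sub_zero] at *

private lemma tik_unique [StrictConvexSpace ℝ X] (A : X →L[ℝ] Y) {p q α : ℝ}
    (hp : 1 < p) (hq : 1 < q) (hα : 0 < α) (y : Y) {x1 x2 : X}
    (h1 : ∀ z : X, ‖A x1 - y‖ ^ p + α * ‖x1‖ ^ q ≤ ‖A z - y‖ ^ p + α * ‖z‖ ^ q)
    (h2 : ∀ z : X, ‖A x2 - y‖ ^ p + α * ‖x2‖ ^ q ≤ ‖A z - y‖ ^ p + α * ‖z‖ ^ q) :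
    x1 = x2 := by
  by_contra hne
  set w : X := (1/2 : ℝ) • (x1 + x2) with hw
  -- A w - y as a midpoint
  have hAw : A w - y = (1/2 : ℝ) • ((A x1 - y) + (A x2 - y)) := by
    rw [hw, map_smul, map_add]
    module
  have hAwle : ‖A w - y‖ ≤ (1/2) * ‖A x1 - y‖ + (1/2) * ‖A x2 - y‖ := by
    rw [hAw, norm_smul]
    calc ‖(1/2 : ℝ)‖ * ‖(A x1 - y) + (A x2 - y)‖
        ≤ (1/2) * (‖A x1 - y‖ + ‖A x2 - y‖) := by
          rw [show ‖(1/2 : ℝ)‖ = (1/2 : ℝ) by norm_num]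
          exact mul_le_mul_of_nonneg_left (norm_add_le _ _) (by norm_num)
      _ = (1/2) * ‖A x1 - y‖ + (1/2) * ‖A x2 - y‖ := by ring
  have hwle : ‖w‖ ≤ (1/2) * ‖x1‖ + (1/2) * ‖x2‖ := by
    rw [hw, norm_smul]
    rw [show ‖(1/2 : ℝ)‖ = (1/2 : ℝ) by norm_num]
    calc (1/2 : ℝ) * ‖x1 + x2‖ ≤ (1/2) * (‖x1‖ + ‖x2‖) :=
          mul_le_mul_of_nonneg_left (norm_add_le _ _) (by norm_num)
      _ = (1/2) * ‖x1‖ + (1/2) * ‖x2‖ := by ring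
  -- convexity for the A-part
  have hApart : ‖A w - y‖ ^ p ≤ (1/2) * ‖A x1 - y‖ ^ p + (1/2) * ‖A x2 - y‖ ^ p := by
    calc ‖A w - y‖ ^ p ≤ ((1/2) * ‖A x1 - y‖ + (1/2) * ‖A x2 - y‖) ^ p :=
          Real.rpow_le_rpow (norm_nonneg _) hAwle (by linarith)
      _ ≤ (1/2) * ‖A x1 - y‖ ^ p + (1/2) * ‖A x2 - y‖ ^ p := by
          have := (convexOn_rpow hp.le).2 (Set.mem_Ici.mpr (norm_nonneg (A x1 - y)))
            (Set.mem_Ici.mpr (norm_nonneg (A x2 - y))) (by norm_num : (0:ℝ) ≤ 1/2)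
            (by norm_num : (0:ℝ) ≤ 1/2) (by norm_num)
          simpa [smul_eq_mul] using this
  -- strict inequality for the norm part
  have hNpart : ‖w‖ ^ q < (1/2) * ‖x1‖ ^ q + (1/2) * ‖x2‖ ^ q := by
    rcases eq_or_ne ‖x1‖ ‖x2‖ with heq | hneq
    · -- strict convexity of the space
      have hx1ne : ‖x1‖ ≠ 0 := by
        intro h0
        apply hne
        have e1 : x1 = 0 := norm_eq_zero.mp h0
        have e2 : x2 = 0 := norm_eq_zero.mp (by rw [← heq]; exact h0)
        rw [e1, e2]
      have hmid : ‖(1/2 : ℝ) • (x1 + x2)‖ < ‖x1‖ :=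
        (norm_midpoint_lt_iff heq).mpr hne
      have : ‖w‖ ^ q < ‖x1‖ ^ q :=
        Real.rpow_lt_rpow (norm_nonneg _) hmid (by linarith)
      calc ‖w‖ ^ q < ‖x1‖ ^ q := this
        _ = (1/2) * ‖x1‖ ^ q + (1/2) * ‖x2‖ ^ q := by rw [← heq]; ring
    · have hstrict := (strictConvexOn_rpow hq).2 (Set.mem_Ici.mpr (norm_nonneg x1))
        (Set.mem_Ici.mpr (norm_nonneg x2)) hneq
        (by norm_num : (0:ℝ) < 1/2) (by norm_num : (0:ℝ) < 1/2) (by norm_num)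
      simp only [smul_eq_mul] at hstrict
      calc ‖w‖ ^ q ≤ ((1/2) * ‖x1‖ + (1/2) * ‖x2‖) ^ q :=
            Real.rpow_le_rpow (norm_nonneg _) hwle (by linarith)
        _ < (1/2) * ‖x1‖ ^ q + (1/2) * ‖x2‖ ^ q := hstrict
  -- combine
  have hm12 : ‖A x1 - y‖ ^ p + α * ‖x1‖ ^ q = ‖A x2 - y‖ ^ p + α * ‖x2‖ ^ q :=
    le_antisymm (h1 x2) (h2 x1)
  have hfw : ‖A w - y‖ ^ p + α * ‖w‖ ^ q
      < ‖A x1 - y‖ ^ p + α * ‖x1‖ ^ q := by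
    have hα2 := mul_lt_mul_of_pos_left hNpart hα
    have h12 : ‖A x1 - y‖ ^ p + α * ‖x1‖ ^ q
        = (1/2) * (‖A x1 - y‖ ^ p + α * ‖x1‖ ^ q) + (1/2) * (‖A x2 - y‖ ^ p + α * ‖x2‖ ^ q) := by
      rw [← hm12]; ring
    rw [h12]; nlinarith
  exact absurd (h1 w) (not_le.mpr hfw)

private lemma tik_exists (hrefl : Function.Surjective (inclusionInDoubleDual ℝ X))
    (A : X →L[ℝ] Y) {p q α : ℝ} (hp : 1 < p) (hq : 1 < q) (hα : 0 < α) (y : Y) :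
    ∃ x : X, ∀ z : X, ‖A x - y‖ ^ p + α * ‖x‖ ^ q ≤ ‖A z - y‖ ^ p + α * ‖z‖ ^ q := by
  have hq0 : (0:ℝ) < q := by linarith
  set c : ℝ := ‖y‖ ^ p + 1 with hc
  have hc0 : 0 ≤ c / α := by positivity
  set R : ℝ := (c / α) ^ q⁻¹ with hR
  have hR0 : 0 ≤ R := Real.rpow_nonneg hc0 _
  have hRq : α * R ^ q = c := by
    rw [hR, Real.rpow_inv_rpow hc0 hq0.ne']
    field_simp
  set S : Set (WeakSpace ℝ X) := {w | ‖(toWeakSpace ℝ X).symm w‖ ≤ R} with hS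
  have hScomp : IsCompact S := tik_compact hrefl R
  have hSne : S.Nonempty := ⟨toWeakSpace ℝ X 0, by
    simp only [hS, Set.mem_setOf_eq, LinearEquiv.symm_apply_apply, norm_zero]; exact hR0⟩
  set F : WeakSpace ℝ X → ℝ :=
    fun w => ‖A ((toWeakSpace ℝ X).symm w) - y‖ ^ p + α * ‖(toWeakSpace ℝ X).symm w‖ ^ q with hF
  have hF0 : ∀ w, 0 ≤ F w := by
    intro w
    have := Real.rpow_nonneg (norm_nonneg (A ((toWeakSpace ℝ X).symm w) - y)) p
    have := Real.rpow_nonneg (norm_nonneg ((toWeakSpace ℝ X).symm w)) q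
    positivity
  have hlsc : LowerSemicontinuous F := by
    have l1 : LowerSemicontinuous
        (fun w : WeakSpace ℝ X => ‖A ((toWeakSpace ℝ X).symm w) - y‖ ^ p) :=
      tik_lsc_rpow (tik_lsc_norm_comp A y) (fun w => norm_nonneg _) (by linarith)
    have l2 : LowerSemicontinuous
        (fun w : WeakSpace ℝ X => ‖(toWeakSpace ℝ X).symm w‖ ^ q) := by
      have := tik_lsc_norm_comp (ContinuousLinearMap.id ℝ X) (0 : X)
      simp only [ContinuousLinearMap.coe_id', id_eq, sub_zero] at this
      exact tik_lsc_rpow this (fun w => norm_nonneg _) hq0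
    have l2' : LowerSemicontinuous
        (fun w : WeakSpace ℝ X => α * ‖(toWeakSpace ℝ X).symm w‖ ^ q) := by
      intro w t ht
      have h' : t / α < ‖(toWeakSpace ℝ X).symm w‖ ^ q := by
        rwa [div_lt_iff₀' hα]
      filter_upwards [l2 w _ h'] with z hz
      rwa [gt_iff_lt, div_lt_iff₀' hα] at hz
    exact l1.add l2'
  obtain ⟨x0, hx0S, hx0min⟩ := tik_min_exists hScomp hSne hlsc hF0
  refine ⟨(toWeakSpace ℝ X).symm x0, fun z => ?_⟩
  rcases le_or_gt ‖z‖ R with hz | hz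
  · have := hx0min (toWeakSpace ℝ X z) (by
      simp only [hS, Set.mem_setOf_eq, LinearEquiv.symm_apply_apply]; exact hz)
    simpa only [hF, LinearEquiv.symm_apply_apply] using this
  · have hz0 : F x0 ≤ ‖y‖ ^ p := by
      have := hx0min (toWeakSpace ℝ X 0) (by
        simp only [hS, Set.mem_setOf_eq, LinearEquiv.symm_apply_apply, norm_zero]; exact hR0)
      simp only [hF, LinearEquiv.symm_apply_apply, map_zero, zero_sub, norm_neg, norm_zero,
        Real.zero_rpow hq0.ne', mul_zero, add_zero] at this
      exact this
    have hbig : c < ‖A z - y‖ ^ p + α * ‖z‖ ^ q := by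
      have h1 : R ^ q < ‖z‖ ^ q := Real.rpow_lt_rpow hR0 hz hq0
      have h2 : c < α * ‖z‖ ^ q := by
        rw [← hRq]
        exact mul_lt_mul_of_pos_left h1 hα
      have h3 : 0 ≤ ‖A z - y‖ ^ p := Real.rpow_nonneg (norm_nonneg _) _
      linarith
    calc F x0 ≤ ‖y‖ ^ p := hz0
      _ ≤ c := by rw [hc]; linarith
      _ ≤ ‖A z - y‖ ^ p + α * ‖z‖ ^ q := hbig.le

end TikAux

set_option maxHeartbeats 1000000

/-- Tikhonov regularization in Banach spaces: if `X` is reflexive, strictly convex and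
has the Radon–Riesz property, then for `p, q > 1` and `α > 0` the Tikhonov functional
`x ↦ ‖A x - y‖^p + α ‖x‖^q` has a unique minimizer `B_α(y)` for each `y`, and the map
`B_α : Y → X` is continuous. -/
theorem stmt_18
    {X Y : Type*} [NormedAddCommGroup X] [NormedSpace ℝ X] [CompleteSpace X]
    [StrictConvexSpace ℝ X]
    [NormedAddCommGroup Y] [NormedSpace ℝ Y] [CompleteSpace Y]
    (hrefl : Function.Surjective (NormedSpace.inclusionInDoubleDual ℝ X))
    (hRR : ∀ (xk : ℕ → X) (x : X),
      (∀ φ : X →L[ℝ] ℝ,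
        Filter.Tendsto (fun k => φ (xk k)) Filter.atTop (nhds (φ x))) →
      Filter.Tendsto (fun k => ‖xk k‖) Filter.atTop (nhds ‖x‖) →
      Filter.Tendsto (fun k => ‖xk k - x‖) Filter.atTop (nhds 0))
    (A : X →L[ℝ] Y) (p q α : ℝ) (hp : 1 < p) (hq : 1 < q) (hα : 0 < α) :
    ∃ B : Y → X, Continuous B ∧ ∀ y : Y,
      (∀ x : X, ‖A (B y) - y‖ ^ p + α * ‖B y‖ ^ q ≤ ‖A x - y‖ ^ p + α * ‖x‖ ^ q) ∧
      (∀ x : X,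
        (∀ z : X, ‖A x - y‖ ^ p + α * ‖x‖ ^ q ≤ ‖A z - y‖ ^ p + α * ‖z‖ ^ q) →
        x = B y) := by
  classical
  have hp0 : (0:ℝ) < p := by linarith
  have hq0 : (0:ℝ) < q := by linarith
  choose B hB using fun y : Y => tik_exists hrefl A hp hq hα y
  have huniq : ∀ (y : Y) (x : X),
      (∀ z : X, ‖A x - y‖ ^ p + α * ‖x‖ ^ q ≤ ‖A z - y‖ ^ p + α * ‖z‖ ^ q) → x = B y :=
    fun y x hx => tik_unique A hp hq hα y hx (hB y)
  refine ⟨B, ?_, fun y => ⟨hB y, huniq y⟩⟩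
  -- continuity
  rw [continuous_iff_seqContinuous]
  intro yk y hyk
  set xk : ℕ → X := fun k => B (yk k) with hxk
  set xb : X := B y with hxb
  -- value of the functional at 0
  have hzero : ∀ y' : Y, ‖A (0:X) - y'‖ ^ p + α * ‖(0:X)‖ ^ q = ‖y'‖ ^ p := by
    intro y'
    simp [Real.zero_rpow hq0.ne']
  -- Step 1 : bound on the data
  obtain ⟨C0, hC0⟩ := (hyk.norm).bddAbove_range
  set C : ℝ := max C0 ‖y‖ with hC
  have hCk : ∀ k, ‖yk k‖ ≤ C := fun k =>
    le_trans (hC0 (Set.mem_range_self k)) (le_max_left _ _)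
  have hCy : ‖y‖ ≤ C := le_max_right _ _
  have hCnn : 0 ≤ C := le_trans (norm_nonneg y) hCy
  -- Step 2 : bound on the minimizers
  set M : ℝ := (C ^ p / α) ^ q⁻¹ with hM
  have hMnn : 0 ≤ M := Real.rpow_nonneg (by positivity) _
  have hbound : ∀ y' : Y, ‖y'‖ ≤ C → ‖B y'‖ ≤ M := by
    intro y' hy'
    have h1 : α * ‖B y'‖ ^ q ≤ ‖y'‖ ^ p := by
      have h2 := hB y' 0
      rw [hzero y'] at h2
      have h3 : 0 ≤ ‖A (B y') - y'‖ ^ p := Real.rpow_nonneg (norm_nonneg _) _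
      linarith
    have h4 : ‖B y'‖ ^ q ≤ C ^ p / α := by
      rw [le_div_iff₀' hα]
      exact le_trans h1 (Real.rpow_le_rpow (norm_nonneg _) hy' hp0.le)
    calc ‖B y'‖ = (‖B y'‖ ^ q) ^ q⁻¹ := (Real.rpow_rpow_inv (norm_nonneg _) hq0.ne').symm
      _ ≤ M := Real.rpow_le_rpow (Real.rpow_nonneg (norm_nonneg _) _) h4 (by positivity)
  have hMk : ∀ k, ‖xk k‖ ≤ M := fun k => hbound _ (hCk k)
  have hMb : ‖xb‖ ≤ M := hbound _ hCy
  -- bound on residual norms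
  set MA : ℝ := ‖A‖ * M + C with hMA
  have hMAx : ∀ (x : X) (y' : Y), ‖x‖ ≤ M → ‖y'‖ ≤ C → ‖A x - y'‖ ≤ MA := by
    intro x y' hx hy'
    calc ‖A x - y'‖ ≤ ‖A x‖ + ‖y'‖ := norm_sub_le _ _
      _ ≤ ‖A‖ * ‖x‖ + C := add_le_add (A.le_opNorm x) hy'
      _ ≤ ‖A‖ * M + C := by
          have := mul_le_mul_of_nonneg_left hx (norm_nonneg A)
          linarith
  -- convergence of the data differences
  have hd0 : Filter.Tendsto (fun k => ‖yk k - y‖) Filter.atTop (nhds 0) := by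
    rw [tendsto_iff_norm_sub_tendsto_zero] at hyk
    exact hyk
  -- Step 3 : values converge
  set u : ℕ → ℝ := fun k => ‖A (xk k) - y‖ ^ p + α * ‖xk k‖ ^ q with hu_def
  set m : ℝ := ‖A xb - y‖ ^ p + α * ‖xb‖ ^ q with hm_def
  have habs : ∀ (x : X) (y₁ y₂ : Y), |‖A x - y₁‖ - ‖A x - y₂‖| ≤ ‖y₁ - y₂‖ := by
    intro x y₁ y₂
    calc |‖A x - y₁‖ - ‖A x - y₂‖| ≤ ‖(A x - y₁) - (A x - y₂)‖ := abs_norm_sub_norm_le _ _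
      _ = ‖y₂ - y₁‖ := by rw [show (A x - y₁) - (A x - y₂) = y₂ - y₁ by abel]
      _ = ‖y₁ - y₂‖ := norm_sub_rev _ _
  have hδ1 : Filter.Tendsto
      (fun k => ‖A (xk k) - y‖ ^ p - ‖A (xk k) - yk k‖ ^ p) Filter.atTop (nhds 0) := by
    apply tik_rpow_sub_tendsto (M := MA) hp0
      (fun k => norm_nonneg _) (fun k => norm_nonneg _)
      (fun k => hMAx _ _ (hMk k) hCy) (fun k => hMAx _ _ (hMk k) (hCk k))
    apply squeeze_zero (fun k => abs_nonneg _) (fun k => ?_) hd0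
    calc |‖A (xk k) - y‖ - ‖A (xk k) - yk k‖| ≤ ‖y - yk k‖ := habs _ _ _
      _ = ‖yk k - y‖ := norm_sub_rev _ _
  have hδ2 : Filter.Tendsto
      (fun k => ‖A xb - yk k‖ ^ p - ‖A xb - y‖ ^ p) Filter.atTop (nhds 0) := by
    apply tik_rpow_sub_tendsto (M := MA) hp0
      (fun k => norm_nonneg _) (fun k => norm_nonneg _)
      (fun k => hMAx _ _ hMb (hCk k)) (fun k => hMAx _ _ hMb hCy)
    apply squeeze_zero (fun k => abs_nonneg _) (fun k => ?_) hd0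
    exact habs _ _ _
  have hum : Filter.Tendsto u Filter.atTop (nhds m) := by
    have hlow : ∀ k, m ≤ u k := fun k => hB y (xk k)
    have hupp : ∀ k, u k ≤ (‖A (xk k) - y‖ ^ p - ‖A (xk k) - yk k‖ ^ p)
        + (‖A xb - yk k‖ ^ p - ‖A xb - y‖ ^ p) + m := by
      intro k
      have h5 := hB (yk k) xb
      simp only [hu_def, hm_def]
      nlinarith [h5]
    have htot : Filter.Tendsto
        (fun k => (‖A (xk k) - y‖ ^ p - ‖A (xk k) - yk k‖ ^ p)
          + (‖A xb - yk k‖ ^ p - ‖A xb - y‖ ^ p) + m) Filter.atTop (nhds m) := by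
      have := (hδ1.add hδ2).add_const m
      simpa using this
    exact tendsto_of_tendsto_of_tendsto_of_le_of_le tendsto_const_nhds htot hlow hupp
  -- Step 4 : weak convergence
  set xk' : ℕ → WeakSpace ℝ X := fun k => toWeakSpace ℝ X (xk k) with hxk'
  set xb' : WeakSpace ℝ X := toWeakSpace ℝ X xb with hxb'
  set F : WeakSpace ℝ X → ℝ := fun w =>
    ‖A ((toWeakSpace ℝ X).symm w) - y‖ ^ p + α * ‖(toWeakSpace ℝ X).symm w‖ ^ q with hF
  have hFlsc : LowerSemicontinuous F := by
    have l1 : LowerSemicontinuous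
        (fun w : WeakSpace ℝ X => ‖A ((toWeakSpace ℝ X).symm w) - y‖ ^ p) :=
      tik_lsc_rpow (tik_lsc_norm_comp A y) (fun w => norm_nonneg _) hp0
    have l2 : LowerSemicontinuous
        (fun w : WeakSpace ℝ X => ‖(toWeakSpace ℝ X).symm w‖ ^ q) := by
      have := tik_lsc_norm_comp (ContinuousLinearMap.id ℝ X) (0 : X)
      simp only [ContinuousLinearMap.coe_id', id_eq, sub_zero] at this
      exact tik_lsc_rpow this (fun w => norm_nonneg _) hq0
    have l2' : LowerSemicontinuous
        (fun w : WeakSpace ℝ X => α * ‖(toWeakSpace ℝ X).symm w‖ ^ q) := by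
      intro w t ht
      have h' : t / α < ‖(toWeakSpace ℝ X).symm w‖ ^ q := by rwa [div_lt_iff₀' hα]
      filter_upwards [l2 w _ h'] with z hz
      rwa [gt_iff_lt, div_lt_iff₀' hα] at hz
    exact l1.add l2'
  have hK : IsCompact {w : WeakSpace ℝ X | ‖(toWeakSpace ℝ X).symm w‖ ≤ M} :=
    tik_compact hrefl M
  have hxkK : ∀ k, xk' k ∈ {w : WeakSpace ℝ X | ‖(toWeakSpace ℝ X).symm w‖ ≤ M} := by
    intro k
    simp only [hxk', Set.mem_setOf_eq, LinearEquiv.symm_apply_apply]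
    exact hMk k
  have hweak : Filter.Tendsto xk' Filter.atTop (nhds xb') := by
    rw [Filter.tendsto_iff_ultrafilter]
    intro U hU
    set V : Ultrafilter (WeakSpace ℝ X) := U.map xk' with hV
    have hVK : {w : WeakSpace ℝ X | ‖(toWeakSpace ℝ X).symm w‖ ≤ M} ∈ V :=
      Ultrafilter.mem_map.mpr (by
        apply Filter.mem_of_superset Filter.univ_mem
        intro k _
        exact hxkK k)
    obtain ⟨z, hzK, hzV⟩ := hK.ultrafilter_le_nhds' V hVK
    have hFz : F z ≤ m := by
      by_contra hcon
      push_neg at hcon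
      obtain ⟨t, htm, htz⟩ := exists_between hcon
      have hnb : {w | t < F w} ∈ nhds z := hFlsc z t htz
      have hinV : {w | t < F w} ∈ V := hzV hnb
      have hinU : {k : ℕ | t < F (xk' k)} ∈ U := Ultrafilter.mem_map.mp hinV
      have hFu : ∀ k, F (xk' k) = u k := by
        intro k
        simp only [hF, hxk', LinearEquiv.symm_apply_apply, hu_def]
      have hev2 : {k : ℕ | u k < t} ∈ U := hU (hum.eventually_lt_const htm)
      obtain ⟨k, hk1, hk2⟩ := Filter.nonempty_of_mem (U.toFilter.inter_sets hinU hev2)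
      rw [Set.mem_setOf_eq, hFu k] at hk1
      exact absurd hk2 (not_lt.mpr hk1.le)
    have hzmin : ∀ w : X, ‖A ((toWeakSpace ℝ X).symm z) - y‖ ^ p
        + α * ‖(toWeakSpace ℝ X).symm z‖ ^ q ≤ ‖A w - y‖ ^ p + α * ‖w‖ ^ q :=
      fun w => le_trans hFz (hB y w)
    have hzeq : (toWeakSpace ℝ X).symm z = xb := huniq y _ hzmin
    have hzxb : z = xb' := by
      rw [hxb', ← hzeq, LinearEquiv.apply_symm_apply]
    rw [← hzxb]
    exact hzV
  have hweakφ : ∀ φ : X →L[ℝ] ℝ,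
      Filter.Tendsto (fun k => φ (xk k)) Filter.atTop (nhds (φ xb)) := by
    intro φ
    have := ((tik_cont_eval φ).tendsto xb').comp hweak
    simpa only [Function.comp_def, hxk', hxb', LinearEquiv.symm_apply_apply] using this
  -- Step 5 : norm convergence
  have hnorm : Filter.Tendsto (fun k => ‖xk k‖) Filter.atTop (nhds ‖xb‖) := by
    obtain ⟨ψ, hψ1, hψ2⟩ := exists_dual_vector'' ℝ (A xb - y)
    obtain ⟨φ₀, hφ₀1, hφ₀2⟩ := exists_dual_vector'' ℝ xb
    have hψle : ∀ (v : Y), ψ v ≤ ‖v‖ := by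
      intro v
      calc ψ v ≤ |ψ v| := le_abs_self _
        _ = ‖ψ v‖ := rfl
        _ ≤ ‖ψ‖ * ‖v‖ := ψ.le_opNorm v
        _ ≤ 1 * ‖v‖ := mul_le_mul_of_nonneg_right hψ1 (norm_nonneg v)
        _ = ‖v‖ := one_mul _
    have hφ₀le : ∀ (v : X), φ₀ v ≤ ‖v‖ := by
      intro v
      calc φ₀ v ≤ |φ₀ v| := le_abs_self _
        _ = ‖φ₀ v‖ := rfl
        _ ≤ ‖φ₀‖ * ‖v‖ := φ₀.le_opNorm v
        _ ≤ 1 * ‖v‖ := mul_le_mul_of_nonneg_right hφ₀1 (norm_nonneg v)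
        _ = ‖v‖ := one_mul _
    have hψt : Filter.Tendsto (fun k => ψ (A (xk k) - y)) Filter.atTop
        (nhds ‖A xb - y‖) := by
      have h1 := hweakφ (ψ.comp A)
      simp only [ContinuousLinearMap.comp_apply] at h1
      have h2 := h1.sub_const (ψ y)
      have h3 : ∀ k, ψ (A (xk k)) - ψ y = ψ (A (xk k) - y) := fun k => (map_sub ψ _ _).symm
      have h4 : ψ (A xb) - ψ y = ‖A xb - y‖ := by rw [← map_sub]; exact hψ2
      rw [h4] at h2
      exact h2.congr h3
    have hφ₀t : Filter.Tendsto (fun k => φ₀ (xk k)) Filter.atTop (nhds ‖xb‖) := by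
      have := hweakφ φ₀
      rwa [hφ₀2] at this
    apply Filter.tendsto_of_subseq_tendsto
    intro ns hns
    -- first extraction : residual norms converge
    obtain ⟨La, hLa, ms1, hms1, hms1t⟩ := tendsto_subseq_of_bounded
      (Metric.isBounded_Icc (0:ℝ) MA)
      (x := fun n => ‖A (xk (ns n)) - y‖)
      (fun n => ⟨norm_nonneg _, hMAx _ _ (hMk _) hCy⟩)
    -- second extraction : norms converge
    obtain ⟨Lr, hLr, ms2, hms2, hms2t⟩ := tendsto_subseq_of_bounded
      (Metric.isBounded_Icc (0:ℝ) M)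
      (x := fun n => ‖xk (ns (ms1 n))‖)
      (fun n => ⟨norm_nonneg _, hMk _⟩)
    rw [isClosed_Icc.closure_eq] at hLa hLr
    set ks : ℕ → ℕ := fun n => ns (ms1 (ms2 n)) with hks_def
    have hks : Filter.Tendsto ks Filter.atTop Filter.atTop :=
      hns.comp ((hms1.tendsto_atTop).comp (hms2.tendsto_atTop))
    have hA : Filter.Tendsto (fun n => ‖A (xk (ks n)) - y‖) Filter.atTop (nhds La) :=
      hms1t.comp hms2.tendsto_atTop
    have hN : Filter.Tendsto (fun n => ‖xk (ks n)‖) Filter.atTop (nhds Lr) := hms2t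
    have hu' : Filter.Tendsto (fun n => u (ks n)) Filter.atTop (nhds m) := hum.comp hks
    have hAp : Filter.Tendsto (fun n => ‖A (xk (ks n)) - y‖ ^ p) Filter.atTop
        (nhds (La ^ p)) :=
      ((Real.continuousAt_rpow_const La p (Or.inr hp0.le)).tendsto).comp hA
    have hNq : Filter.Tendsto (fun n => α * ‖xk (ks n)‖ ^ q) Filter.atTop
        (nhds (α * Lr ^ q)) :=
      (((Real.continuousAt_rpow_const Lr q (Or.inr hq0.le)).tendsto).comp hN).const_mul α
    have hsum : La ^ p + α * Lr ^ q = m := by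
      have h6 : Filter.Tendsto (fun n => u (ks n)) Filter.atTop
          (nhds (La ^ p + α * Lr ^ q)) := by
        have := hAp.add hNq
        simpa only [hu_def] using this
      exact tendsto_nhds_unique h6 hu'
    have hLaa : ‖A xb - y‖ ≤ La :=
      le_of_tendsto_of_tendsto' (hψt.comp hks) hA (fun n => hψle _)
    have hLrr : ‖xb‖ ≤ Lr :=
      le_of_tendsto_of_tendsto' (hφ₀t.comp hks) hN (fun n => hφ₀le _)
    have hLa0 : 0 ≤ La := hLa.1
    have hLr0 : 0 ≤ Lr := hLr.1
    have hLap : ‖A xb - y‖ ^ p ≤ La ^ p := Real.rpow_le_rpow (norm_nonneg _) hLaa hp0.le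
    have hLrq : ‖xb‖ ^ q ≤ Lr ^ q := Real.rpow_le_rpow (norm_nonneg _) hLrr hq0.le
    have heq : Lr ^ q = ‖xb‖ ^ q := by
      have hmd : m = ‖A xb - y‖ ^ p + α * ‖xb‖ ^ q := hm_def
      have hmul1 : α * ‖xb‖ ^ q ≤ α * Lr ^ q := mul_le_mul_of_nonneg_left hLrq hα.le
      have : α * Lr ^ q = α * ‖xb‖ ^ q := by linarith
      exact mul_left_cancel₀ hα.ne' this
    have hLreq : Lr = ‖xb‖ := by
      calc Lr = (Lr ^ q) ^ q⁻¹ := (Real.rpow_rpow_inv hLr0 hq0.ne').symm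
        _ = (‖xb‖ ^ q) ^ q⁻¹ := by rw [heq]
        _ = ‖xb‖ := Real.rpow_rpow_inv (norm_nonneg _) hq0.ne'
    exact ⟨fun n => ms1 (ms2 n), by rw [← hLreq]; exact hN⟩
  -- Step 6 : Radon-Riesz
  have hfinal := hRR xk xb hweakφ hnorm
  have : Filter.Tendsto xk Filter.atTop (nhds xb) := by
    rw [tendsto_iff_norm_sub_tendsto_zero]
    exact hfinal
  exact this
end

section
/- Let X be a reflexive, strictly convex real Banach space satisfying the Radon–Riesz property, Y a real Banach space, A : X → Y a bounded linear operator, and p, q > 1. For α > 0 and y ∈ Y let B_α(y) denote the unique minimizer of x ↦ ‖A x − y‖^p + α ‖x‖^q. Let α₀ : (0,∞) → (0,∞) satisfy α₀(δ) → 0 and δ^p/α₀(δ) → 0 as δ → 0. Then for every x ∈ X that is the unique minimal-norm solution of A z = A x (i.e., ‖x‖ < ‖z‖ for every z ≠ x with A z = A x), one has sup{‖x − B_{α₀(δ)}(y^δ)‖ : y^δ ∈ Y, ‖A x − y^δ‖ ≤ δ} → 0 as δ → 0. -/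
open Filter Metric Set NormedSpace Topology

section TikhonovAux

variable {X Y : Type*} [NormedAddCommGroup X] [NormedSpace ℝ X]
  [NormedAddCommGroup Y] [NormedSpace ℝ Y]

def ofW (X : Type*) [NormedAddCommGroup X] [NormedSpace ℝ X] : WeakSpace ℝ X → X := fun x => x

lemma weak_eval_continuous (φ : X →L[ℝ] ℝ) :
    Continuous fun x : WeakSpace ℝ X => φ (ofW X x) := by
  exact WeakBilin.eval_continuous ((topDualPairing ℝ X).flip) φ

lemma weak_isClosed_halfspace (φ : X →L[ℝ] ℝ) (c : ℝ) :
    IsClosed {x : WeakSpace ℝ X | φ (ofW X x) ≤ c} :=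
  isClosed_le (weak_eval_continuous φ) continuous_const

lemma weak_isClosed_ball (r : ℝ) (hr : 0 ≤ r) :
    IsClosed {x : WeakSpace ℝ X | ‖ofW X x‖ ≤ r} := by
  have : {x : WeakSpace ℝ X | ‖ofW X x‖ ≤ r}
      = ⋂ (φ : {φ : X →L[ℝ] ℝ // ‖φ‖ ≤ 1}), {x : WeakSpace ℝ X | (φ : X →L[ℝ] ℝ) (ofW X x) ≤ r} := by
    ext x
    simp only [mem_setOf_eq, mem_iInter]
    constructor
    · intro h φ
      calc (φ : X →L[ℝ] ℝ) (ofW X x) ≤ ‖(φ : X →L[ℝ] ℝ) (ofW X x)‖ := le_abs_self _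
        _ ≤ ‖(φ : X →L[ℝ] ℝ)‖ * ‖ofW X x‖ := (φ : X →L[ℝ] ℝ).le_opNorm _
        _ ≤ 1 * r := mul_le_mul φ.2 h (norm_nonneg _) zero_le_one
        _ = r := one_mul r
    · intro h
      by_cases hx : ofW X x = 0
      · rw [hx, norm_zero]; exact hr
      · obtain ⟨φ, hφ1, hφx⟩ := exists_dual_vector ℝ (ofW X x) (norm_ne_zero_iff.mpr hx)
        have := h ⟨φ, le_of_eq hφ1⟩
        simp only [RCLike.ofReal_real_eq_id, id_eq] at hφx
        rw [← hφx] at *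
        exact this
  rw [this]
  exact isClosed_iInter fun φ => weak_isClosed_halfspace _ _

noncomputable def wback (hrefl : Function.Surjective (inclusionInDoubleDual ℝ X)) :
    WeakDual ℝ (X →L[ℝ] ℝ) → WeakSpace ℝ X :=
  fun F => (Equiv.ofBijective _ ⟨(inclusionInDoubleDualLi ℝ (E := X)).injective, hrefl⟩).symm
    (WeakDual.toStrongDual F)

lemma wback_spec (hrefl : Function.Surjective (inclusionInDoubleDual ℝ X))
    (F : WeakDual ℝ (X →L[ℝ] ℝ)) :
    inclusionInDoubleDual ℝ X (ofW X (wback hrefl F)) = WeakDual.toStrongDual F :=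
  (Equiv.ofBijective _ ⟨(inclusionInDoubleDualLi ℝ (E := X)).injective, hrefl⟩).apply_symm_apply _

lemma weak_isCompact_ball (hrefl : Function.Surjective (inclusionInDoubleDual ℝ X)) (r : ℝ) :
    IsCompact {x : WeakSpace ℝ X | ‖ofW X x‖ ≤ r} := by
  have hcont : Continuous (wback hrefl) := by
    apply WeakBilin.continuous_of_continuous_eval
    intro φ
    have : (fun F : WeakDual ℝ (X →L[ℝ] ℝ) => ((topDualPairing ℝ X).flip (wback hrefl F)) φ)
        = fun F => F φ := by
      funext F
      have h := wback_spec hrefl F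
      have h2 : inclusionInDoubleDual ℝ X (ofW X (wback hrefl F)) φ
          = WeakDual.toStrongDual F φ := by rw [h]
      exact h2
    rw [this]
    exact WeakDual.eval_continuous φ
  have himg : wback hrefl '' (WeakDual.toStrongDual ⁻¹' closedBall 0 r)
      = {x : WeakSpace ℝ X | ‖ofW X x‖ ≤ r} := by
    ext x
    simp only [mem_image, mem_preimage, mem_closedBall, dist_zero_right, mem_setOf_eq]
    constructor
    · rintro ⟨F, hF, rfl⟩
      have := wback_spec hrefl F
      have : ‖ofW X (wback hrefl F)‖ = ‖WeakDual.toStrongDual F‖ := by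
        rw [← this]
        exact ((inclusionInDoubleDualLi ℝ (E := X)).norm_map _).symm
      rw [this]; exact (dist_zero_right (WeakDual.toStrongDual F)).symm.trans_le hF
    · intro hx
      refine ⟨WeakDual.toStrongDual.symm (inclusionInDoubleDual ℝ X (ofW X x)), ?_, ?_⟩
      · exact (dist_zero_right (inclusionInDoubleDual ℝ X (ofW X x))).trans_le (le_trans (double_dual_bound ℝ X (ofW X x)) hx)
      · apply (inclusionInDoubleDualLi ℝ (E := X)).injective
        have := wback_spec hrefl (WeakDual.toStrongDual.symm (inclusionInDoubleDual ℝ X (ofW X x)))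
        simp only [LinearEquiv.apply_symm_apply] at this
        exact this
  rw [← himg]
  exact (WeakDual.isCompact_closedBall (𝕜 := ℝ) (0 : StrongDual ℝ (X →L[ℝ] ℝ)) r).image hcont

lemma weak_isClosed_opball (A : X →L[ℝ] Y) (y0 : Y) (c : ℝ) (hc : 0 ≤ c) :
    IsClosed {z : WeakSpace ℝ X | ‖A (ofW X z) - y0‖ ≤ c} := by
  have : {z : WeakSpace ℝ X | ‖A (ofW X z) - y0‖ ≤ c}
      = ⋂ (ψ : {ψ : Y →L[ℝ] ℝ // ‖ψ‖ ≤ 1}),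
          {z : WeakSpace ℝ X | ((ψ : Y →L[ℝ] ℝ).comp A) (ofW X z) - (ψ : Y →L[ℝ] ℝ) y0 ≤ c} := by
    ext z
    simp only [mem_setOf_eq, mem_iInter, ContinuousLinearMap.comp_apply]
    constructor
    · intro h ψ
      have : (ψ : Y →L[ℝ] ℝ) (A (ofW X z)) - (ψ : Y →L[ℝ] ℝ) y0
          = (ψ : Y →L[ℝ] ℝ) (A (ofW X z) - y0) := by rw [map_sub]
      rw [this]
      calc (ψ : Y →L[ℝ] ℝ) (A (ofW X z) - y0) ≤ ‖(ψ : Y →L[ℝ] ℝ) (A (ofW X z) - y0)‖ :=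
            le_abs_self _
        _ ≤ ‖(ψ : Y →L[ℝ] ℝ)‖ * ‖A (ofW X z) - y0‖ := (ψ : Y →L[ℝ] ℝ).le_opNorm _
        _ ≤ 1 * c := mul_le_mul ψ.2 h (norm_nonneg _) zero_le_one
        _ = c := one_mul c
    · intro h
      by_cases hz : A (ofW X z) - y0 = 0
      · rw [hz, norm_zero]; exact hc
      · obtain ⟨ψ, hψ1, hψz⟩ := exists_dual_vector ℝ (A (ofW X z) - y0) (norm_ne_zero_iff.mpr hz)
        have h2 := h ⟨ψ, le_of_eq hψ1⟩
        simp only [RCLike.ofReal_real_eq_id, id_eq] at hψz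
        rw [← hψz]
        rw [← map_sub] at h2
        exact h2
  rw [this]
  exact isClosed_iInter fun ψ =>
    isClosed_le (((weak_eval_continuous _).sub continuous_const)) continuous_const

lemma core_aux (hrefl : Function.Surjective (inclusionInDoubleDual ℝ X))
    (A : X →L[ℝ] Y) (x : X)
    (hmin : ∀ z : X, A z = A x → z ≠ x → ‖x‖ < ‖z‖)
    (xk : ℕ → X)
    (hb : ∀ η : ℝ, 0 < η → ∀ᶠ k in atTop, ‖xk k‖ ≤ ‖x‖ + η)
    (hA : Tendsto (fun k => ‖A (xk k) - A x‖) atTop (nhds 0))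
    (φ : X →L[ℝ] ℝ) (ε' : ℝ) (hε' : 0 < ε')
    (hfreq : ∃ᶠ k in atTop, φ x + ε' ≤ φ (xk k)) : False := by
  set Z : ℕ → Set (WeakSpace ℝ X) := fun m =>
    {z : WeakSpace ℝ X | ‖ofW X z‖ ≤ ‖x‖ + 1 / (m + 1)} ∩
    {z : WeakSpace ℝ X | φ x + ε' ≤ φ (ofW X z)} ∩
    {z : WeakSpace ℝ X | ‖A (ofW X z) - A x‖ ≤ 1 / (m + 1)} with hZ
  have hpos : ∀ m : ℕ, (0 : ℝ) < 1 / (m + 1) := fun m => by positivity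
  have hclosed : ∀ m, IsClosed (Z m) := by
    intro m
    refine ((weak_isClosed_ball _ (by positivity)).inter ?_).inter
      (weak_isClosed_opball A (A x) _ (hpos m).le)
    exact isClosed_le continuous_const (weak_eval_continuous φ)
  have hdiv1 : ∀ m : ℕ, (1 : ℝ) / (m + 1) ≤ 1 := by
    intro m
    rw [div_le_one (by positivity)]; linarith [Nat.cast_nonneg (α := ℝ) m]
  have hsub : ∀ m, Z m ⊆ {z : WeakSpace ℝ X | ‖ofW X z‖ ≤ ‖x‖ + 1} := by
    intro m z hz
    obtain ⟨⟨h1, _⟩, _⟩ := hz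
    have h1' : ‖ofW X z‖ ≤ ‖x‖ + 1 / (m + 1) := h1
    have := hdiv1 m
    simp only [mem_setOf_eq]
    linarith
  have hcpt : IsCompact (Z 0) :=
    (weak_isCompact_ball hrefl (‖x‖ + 1)).of_isClosed_subset (hclosed 0) (hsub 0)
  have hmono : ∀ m, Z (m + 1) ⊆ Z m := by
    intro m z hz
    have hle : (1 : ℝ) / ((m + 1 : ℕ) + 1) ≤ 1 / (m + 1) := by
      apply one_div_le_one_div_of_le (by positivity); push_cast; linarith
    obtain ⟨⟨h1, h2⟩, h3⟩ := hz
    have h1' : ‖ofW X z‖ ≤ ‖x‖ + 1 / ((m + 1 : ℕ) + 1) := h1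
    have h3' : ‖A (ofW X z) - A x‖ ≤ 1 / ((m + 1 : ℕ) + 1) := h3
    exact ⟨⟨by simp only [mem_setOf_eq]; linarith, h2⟩, by simp only [mem_setOf_eq]; linarith⟩
  have hne : ∀ m, (Z m).Nonempty := by
    intro m
    have h1 := hb (1 / (m + 1)) (hpos m)
    have h2 : ∀ᶠ k in atTop, ‖A (xk k) - A x‖ ≤ 1 / (m + 1) := by
      have := hA.eventually (eventually_le_nhds (hpos m))
      simpa using this
    obtain ⟨k, hk1, hk2, hk3⟩ := (hfreq.and_eventually (h1.and h2)).exists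
    exact ⟨xk k, ⟨⟨hk2, hk1⟩, hk3⟩⟩
  obtain ⟨z, hz⟩ := IsCompact.nonempty_iInter_of_sequence_nonempty_isCompact_isClosed
    Z hmono hne hcpt hclosed
  simp only [mem_iInter] at hz
  have hz1 : ‖ofW X z‖ ≤ ‖x‖ := by
    refine le_of_forall_pos_le_add fun η hη => ?_
    obtain ⟨m, hm⟩ := exists_nat_one_div_lt hη
    exact le_trans (hz m).1.1 (by linarith [(hm : (1:ℝ)/(m+1) < η)])
  have hz2 : A (ofW X z) = A x := by
    have : ‖A (ofW X z) - A x‖ = 0 := by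
      refine le_antisymm (le_of_forall_pos_le_add fun η hη => ?_) (norm_nonneg _)
      obtain ⟨m, hm⟩ := exists_nat_one_div_lt hη
      exact le_trans (hz m).2 (by linarith [(hm : (1:ℝ)/(m+1) < η)])
    rwa [norm_sub_eq_zero_iff] at this
  have hz3 : ofW X z ≠ x := by
    intro h
    have h2 : φ x + ε' ≤ φ (ofW X z) := (hz 0).1.2
    rw [h] at h2
    linarith
  exact absurd hz1 (not_le.mpr (hmin (ofW X z) hz2 hz3))

lemma core_conv (hrefl : Function.Surjective (inclusionInDoubleDual ℝ X))
    (hRR : ∀ (xk : ℕ → X) (x : X),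
      (∀ φ : X →L[ℝ] ℝ, Tendsto (fun k => φ (xk k)) atTop (nhds (φ x))) →
      Tendsto (fun k => ‖xk k‖) atTop (nhds ‖x‖) →
      Tendsto (fun k => ‖xk k - x‖) atTop (nhds 0))
    (A : X →L[ℝ] Y) (x : X)
    (hmin : ∀ z : X, A z = A x → z ≠ x → ‖x‖ < ‖z‖)
    (xk : ℕ → X)
    (hb : ∀ η : ℝ, 0 < η → ∀ᶠ k in atTop, ‖xk k‖ ≤ ‖x‖ + η)
    (hA : Tendsto (fun k => ‖A (xk k) - A x‖) atTop (nhds 0)) :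
    Tendsto (fun k => ‖xk k - x‖) atTop (nhds 0) := by
  have hweak : ∀ φ : X →L[ℝ] ℝ, Tendsto (fun k => φ (xk k)) atTop (nhds (φ x)) := by
    intro φ
    rw [Metric.tendsto_atTop]
    by_contra hcon
    push_neg at hcon
    obtain ⟨ε', hε', hcon⟩ := hcon
    have hfreq : ∃ᶠ k in atTop, ε' ≤ dist (φ (xk k)) (φ x) := by
      rw [frequently_atTop]
      intro N
      obtain ⟨k, hk1, hk2⟩ := hcon N
      exact ⟨k, hk1, hk2⟩
    have : ∃ᶠ k in atTop, (φ x + ε' ≤ φ (xk k)) ∨ ((-φ) x + ε' ≤ (-φ) (xk k)) := by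
      refine hfreq.mono fun k hk => ?_
      rw [Real.dist_eq, le_abs] at hk
      rcases hk with h | h
      · left; linarith
      · right
        simp only [ContinuousLinearMap.neg_apply]
        linarith
    rcases frequently_or_distrib.mp this with h | h
    · exact core_aux hrefl A x hmin xk hb hA φ ε' hε' h
    · exact core_aux hrefl A x hmin xk hb hA (-φ) ε' hε' h
  have hnorm : Tendsto (fun k => ‖xk k‖) atTop (nhds ‖x‖) := by
    obtain ⟨φ, hφ1, hφx⟩ := exists_dual_vector'' ℝ x
    simp only [RCLike.ofReal_real_eq_id, id_eq] at hφx
    rw [Metric.tendsto_atTop]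
    intro η hη
    have h1 := hb (η / 2) (by linarith)
    have h2 : ∀ᶠ k in atTop, ‖x‖ - η < φ (xk k) := by
      have := (hweak φ).eventually (eventually_gt_nhds (show φ x - η < φ x by linarith))
      refine this.mono fun k hk => by rw [hφx] at hk; linarith
    obtain ⟨N, hN⟩ := eventually_atTop.mp (h1.and h2)
    refine ⟨N, fun k hk => ?_⟩
    obtain ⟨hk1, hk2⟩ := hN k hk
    have hk3 : φ (xk k) ≤ ‖xk k‖ := by
      calc φ (xk k) ≤ ‖φ (xk k)‖ := le_abs_self _
        _ ≤ ‖φ‖ * ‖xk k‖ := φ.le_opNorm _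
        _ ≤ 1 * ‖xk k‖ := mul_le_mul_of_nonneg_right hφ1 (norm_nonneg _)
        _ = ‖xk k‖ := one_mul _
    rw [Real.dist_eq, abs_lt]
    constructor <;> linarith
  exact hRR xk x hweak hnorm

end TikhonovAux

/-- Convergence of Tikhonov regularization in Banach spaces: if `X` is reflexive,
strictly convex and has the Radon–Riesz property, `B_α(y)` is the unique minimizer of
`x ↦ ‖A x - y‖^p + α ‖x‖^q` (`p, q > 1`), and the parameter choice satisfies
`α₀(δ) → 0` and `δ^p / α₀(δ) → 0` as `δ → 0`, then for every `x` that is the unique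
minimal-norm solution of `A z = A x`,
`sup {‖x - B_{α₀(δ)}(y^δ)‖ : ‖A x - y^δ‖ ≤ δ} → 0` as `δ → 0`. -/
theorem stmt_19
    {X Y : Type*} [NormedAddCommGroup X] [NormedSpace ℝ X] [CompleteSpace X]
    [StrictConvexSpace ℝ X]
    [NormedAddCommGroup Y] [NormedSpace ℝ Y] [CompleteSpace Y]
    (hrefl : Function.Surjective (NormedSpace.inclusionInDoubleDual ℝ X))
    (hRR : ∀ (xk : ℕ → X) (x : X),
      (∀ φ : X →L[ℝ] ℝ,
        Filter.Tendsto (fun k => φ (xk k)) Filter.atTop (nhds (φ x))) →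
      Filter.Tendsto (fun k => ‖xk k‖) Filter.atTop (nhds ‖x‖) →
      Filter.Tendsto (fun k => ‖xk k - x‖) Filter.atTop (nhds 0))
    (A : X →L[ℝ] Y) (p q : ℝ) (hp : 1 < p) (hq : 1 < q)
    (Bα : ℝ → Y → X)
    (hBmin : ∀ a : ℝ, 0 < a → ∀ y : Y, ∀ x : X,
      ‖A (Bα a y) - y‖ ^ p + a * ‖Bα a y‖ ^ q ≤ ‖A x - y‖ ^ p + a * ‖x‖ ^ q)
    (hBuniq : ∀ a : ℝ, 0 < a → ∀ y : Y, ∀ x : X,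
      (∀ z : X, ‖A x - y‖ ^ p + a * ‖x‖ ^ q ≤ ‖A z - y‖ ^ p + a * ‖z‖ ^ q) →
      x = Bα a y)
    (α₀ : ℝ → ℝ) (hα₀pos : ∀ δ : ℝ, 0 < δ → 0 < α₀ δ)
    (hα₀0 : Filter.Tendsto α₀ (nhdsWithin 0 (Set.Ioi (0 : ℝ))) (nhds 0))
    (hα₀rate : Filter.Tendsto (fun δ : ℝ => δ ^ p / α₀ δ)
      (nhdsWithin 0 (Set.Ioi (0 : ℝ))) (nhds 0)) :
    ∀ x : X, (∀ z : X, A z = A x → z ≠ x → ‖x‖ < ‖z‖) →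
      ∀ ε : ℝ, 0 < ε → ∃ δ₀ > 0, ∀ δ : ℝ, 0 < δ → δ ≤ δ₀ →
        ∀ yδ : Y, ‖A x - yδ‖ ≤ δ → ‖x - Bα (α₀ δ) yδ‖ ≤ ε := by
  intro x hmin ε hε
  by_contra hcon
  push_neg at hcon
  have hp0 : (0 : ℝ) < p := by linarith
  have hq0 : (0 : ℝ) < q := by linarith
  choose δ hδpos hδle yδ hyb hfar using fun k : ℕ =>
    hcon (1 / (k + 1)) (by positivity)
  -- the sequence of regularized solutions
  set xk : ℕ → X := fun k => Bα (α₀ (δ k)) (yδ k) with hxk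
  set αk : ℕ → ℝ := fun k => α₀ (δ k) with hαk
  have hαpos : ∀ k, 0 < αk k := fun k => hα₀pos _ (hδpos k)
  -- δ tends to 0 within Ioi 0
  have tδ : Tendsto δ atTop (nhds 0) := by
    apply squeeze_zero (fun k => (hδpos k).le) hδle
    exact tendsto_one_div_add_atTop_nhds_zero_nat
  have tδ0 : Tendsto δ atTop (nhdsWithin 0 (Set.Ioi (0 : ℝ))) :=
    tendsto_nhdsWithin_of_tendsto_nhds_of_eventually_within δ tδ
      (Eventually.of_forall fun k => hδpos k)
  have hα : Tendsto αk atTop (nhds 0) := hα₀0.comp tδ0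
  have hr : Tendsto (fun k => (δ k) ^ p / αk k) atTop (nhds 0) := hα₀rate.comp tδ0
  -- the key minimization inequality
  have key : ∀ k, ‖A (xk k) - yδ k‖ ^ p + αk k * ‖xk k‖ ^ q
      ≤ (δ k) ^ p + αk k * ‖x‖ ^ q := by
    intro k
    refine le_trans (hBmin (αk k) (hαpos k) (yδ k) x) ?_
    have := Real.rpow_le_rpow (norm_nonneg _) (hyb k) hp0.le
    linarith
  have bound1 : ∀ k, ‖xk k‖ ^ q ≤ (δ k) ^ p / αk k + ‖x‖ ^ q := by
    intro k
    have h := key k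
    have hnn : (0 : ℝ) ≤ ‖A (xk k) - yδ k‖ ^ p := Real.rpow_nonneg (norm_nonneg _) p
    have h2 : ‖xk k‖ ^ q - ‖x‖ ^ q ≤ (δ k) ^ p / αk k := by
      rw [le_div_iff₀ (hαpos k)]
      nlinarith
    linarith
  have bound2 : ∀ k, ‖A (xk k) - yδ k‖ ^ p ≤ (δ k) ^ p + αk k * ‖x‖ ^ q := by
    intro k
    have h := key k
    have hnn : (0 : ℝ) ≤ αk k * ‖xk k‖ ^ q :=
      mul_nonneg (hαpos k).le (Real.rpow_nonneg (norm_nonneg _) q)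
    linarith
  -- norm bound eventually
  have hb : ∀ η : ℝ, 0 < η → ∀ᶠ k in atTop, ‖xk k‖ ≤ ‖x‖ + η := by
    intro η hη
    set u : ℕ → ℝ := fun k => (δ k) ^ p / αk k + ‖x‖ ^ q with hu
    have huT : Tendsto u atTop (nhds (‖x‖ ^ q)) := by
      have := hr.add (tendsto_const_nhds (x := ‖x‖ ^ q) (f := atTop (α := ℕ)))
      simpa using this
    have hvT : Tendsto (fun k => (u k) ^ (1 / q)) atTop (nhds ((‖x‖ ^ q) ^ (1 / q))) := by
      exact ((Real.continuousAt_rpow_const (‖x‖ ^ q) (1 / q)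
        (Or.inr (by positivity))).tendsto).comp huT
    have hxq : (‖x‖ ^ q) ^ (1 / q) = ‖x‖ := by
      rw [one_div, Real.rpow_rpow_inv (norm_nonneg x) hq0.ne']
    rw [hxq] at hvT
    have hev := hvT.eventually (eventually_le_nhds (show ‖x‖ < ‖x‖ + η by linarith))
    refine hev.mono fun k hk => le_trans ?_ hk
    have h1 : ‖xk k‖ = (‖xk k‖ ^ q) ^ (1 / q) := by
      rw [one_div, Real.rpow_rpow_inv (norm_nonneg _) hq0.ne']
    rw [h1]
    exact Real.rpow_le_rpow (Real.rpow_nonneg (norm_nonneg _) q) (bound1 k) (by positivity)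
  -- residual convergence
  have hδp : Tendsto (fun k => (δ k) ^ p) atTop (nhds 0) := by
    have heq : (fun k => (δ k) ^ p) = fun k => ((δ k) ^ p / αk k) * αk k := by
      funext k
      rw [div_mul_cancel₀ _ (hαpos k).ne']
    rw [heq]
    simpa using hr.mul hα
  have hinner : Tendsto (fun k => (δ k) ^ p + αk k * ‖x‖ ^ q) atTop (nhds 0) := by
    have := hδp.add (hα.mul_const (‖x‖ ^ q))
    simpa using this
  have hwT : Tendsto (fun k => ((δ k) ^ p + αk k * ‖x‖ ^ q) ^ (1 / p) + δ k)
      atTop (nhds 0) := by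
    have h1 : Tendsto (fun k => ((δ k) ^ p + αk k * ‖x‖ ^ q) ^ (1 / p)) atTop (nhds 0) := by
      have := ((Real.continuousAt_rpow_const 0 (1 / p)
        (Or.inr (by positivity))).tendsto).comp hinner
      rw [show ((0:ℝ) ^ (1/p)) = 0 from Real.zero_rpow (one_div_ne_zero hp0.ne')] at this
      exact this
    simpa using h1.add tδ
  have hA : Tendsto (fun k => ‖A (xk k) - A x‖) atTop (nhds 0) := by
    apply squeeze_zero (fun k => norm_nonneg _) (g := fun k =>
      ((δ k) ^ p + αk k * ‖x‖ ^ q) ^ (1 / p) + δ k) _ hwT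
    intro k
    have h1 : ‖A (xk k) - A x‖ ≤ ‖A (xk k) - yδ k‖ + ‖A x - yδ k‖ := by
      have := norm_sub_le_norm_sub_add_norm_sub (A (xk k)) (yδ k) (A x)
      rw [norm_sub_rev (yδ k) (A x)] at this
      exact this
    have h2 : ‖A (xk k) - yδ k‖ ≤ ((δ k) ^ p + αk k * ‖x‖ ^ q) ^ (1 / p) := by
      have heq : ‖A (xk k) - yδ k‖ = (‖A (xk k) - yδ k‖ ^ p) ^ (1 / p) := by
        rw [one_div, Real.rpow_rpow_inv (norm_nonneg _) hp0.ne']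
      rw [heq]
      exact Real.rpow_le_rpow (Real.rpow_nonneg (norm_nonneg _) p) (bound2 k) (by positivity)
    linarith [hyb k]
  -- conclude
  have hconv := core_conv hrefl hRR A x hmin xk hb hA
  have := (hconv.eventually (eventually_lt_nhds hε)).exists
  obtain ⟨k, hk⟩ := this
  have := hfar k
  rw [norm_sub_rev] at this
  linarith
end
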